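/- arXiv:1309.2393 — 6 statements merged into one kernel-verified Lean document; each statement's English description precedes it below -/
import Mathlib

section
/- Let X be a nonempty set, H a Hermitian kernel on X and L a positive semidefinite kernel on X. Then the following are equivalent: (1) |[f,f]_H| ≤ [f,f]_L for every finitely supported f : X → ℂ; (2) |[f,g]_H|² ≤ [f,f]_L · [g,g]_L for all finitely supported f, g : X → ℂ. -/
open scoped ComplexOrder

/-- The inner product `[f,g]_K = ∑_{x,y} K(x,y) f(y) conj(g(x))` associated to a kernel `K`,
for finitely supported `f, g : X → ℂ`. -/
noncomputable def kerIP {X : Type*} (K : X → X → ℂ) (f g : X →₀ ℂ) : ℂ :=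
  ∑ x ∈ g.support, ∑ y ∈ f.support, K x y * f y * (starRingEnd ℂ) (g x)

/-- A kernel is positive semidefinite if `[f,f]_K` is real and nonnegative for all
finitely supported `f`. -/
def IsPSDKernel {X : Type*} (K : X → X → ℂ) : Prop := ∀ f : X →₀ ℂ, 0 ≤ kerIP K f f

/-- A kernel is Hermitian if `K(x,y) = conj (K(y,x))`. -/
def IsHermitianKernel {X : Type*} (K : X → X → ℂ) : Prop :=
  ∀ x y, K x y = (starRingEnd ℂ) (K y x)


lemma kerIP_eq {X : Type*} (K : X → X → ℂ) (f g : X →₀ ℂ) {s t : Finset X}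
    (hs : f.support ⊆ s) (ht : g.support ⊆ t) :
    kerIP K f g = ∑ x ∈ t, ∑ y ∈ s, K x y * f y * (starRingEnd ℂ) (g x) := by
  unfold kerIP
  rw [Finset.sum_subset ht (fun x _ hx => by
      simp [Finsupp.notMem_support_iff.mp hx])]
  exact Finset.sum_congr rfl fun x _ =>
    Finset.sum_subset hs (fun y _ hy => by
      simp [Finsupp.notMem_support_iff.mp hy])

lemma kerIP_add_left {X : Type*} (K : X → X → ℂ) (f₁ f₂ g : X →₀ ℂ) :
    kerIP K (f₁ + f₂) g = kerIP K f₁ g + kerIP K f₂ g := by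
  classical
  rw [kerIP_eq K (f₁ + f₂) g (Finsupp.support_add) (subset_refl _),
      kerIP_eq K f₁ g (Finset.subset_union_left) (subset_refl _),
      kerIP_eq K f₂ g (Finset.subset_union_right) (subset_refl _),
      ← Finset.sum_add_distrib]
  refine Finset.sum_congr rfl fun x _ => ?_
  rw [← Finset.sum_add_distrib]
  refine Finset.sum_congr rfl fun y _ => ?_
  simp [Finsupp.add_apply]; ring

lemma kerIP_smul_left {X : Type*} (K : X → X → ℂ) (c : ℂ) (f g : X →₀ ℂ) :
    kerIP K (c • f) g = c * kerIP K f g := by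
  rw [kerIP_eq K (c • f) g (Finsupp.support_smul) (subset_refl _)]
  unfold kerIP
  rw [Finset.mul_sum]
  refine Finset.sum_congr rfl fun x _ => ?_
  rw [Finset.mul_sum]
  refine Finset.sum_congr rfl fun y _ => ?_
  simp [Finsupp.smul_apply]; ring

lemma kerIP_smul_right {X : Type*} (K : X → X → ℂ) (c : ℂ) (f g : X →₀ ℂ) :
    kerIP K f (c • g) = (starRingEnd ℂ) c * kerIP K f g := by
  rw [kerIP_eq K f (c • g) (subset_refl _) (Finsupp.support_smul)]
  unfold kerIP
  rw [Finset.mul_sum]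
  refine Finset.sum_congr rfl fun x _ => ?_
  rw [Finset.mul_sum]
  refine Finset.sum_congr rfl fun y _ => ?_
  simp [Finsupp.smul_apply, map_mul]; ring

lemma kerIP_neg_left {X : Type*} (K : X → X → ℂ) (f g : X →₀ ℂ) :
    kerIP K (-f) g = -kerIP K f g := by
  rw [← neg_one_smul ℂ f, kerIP_smul_left]; ring

lemma kerIP_neg_right {X : Type*} (K : X → X → ℂ) (f g : X →₀ ℂ) :
    kerIP K f (-g) = -kerIP K f g := by
  rw [← neg_one_smul ℂ g, kerIP_smul_right]; simp

lemma kerIP_add_right {X : Type*} (K : X → X → ℂ) (f g₁ g₂ : X →₀ ℂ) :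
    kerIP K f (g₁ + g₂) = kerIP K f g₁ + kerIP K f g₂ := by
  classical
  rw [kerIP_eq K f (g₁ + g₂) (subset_refl _) (Finsupp.support_add),
      kerIP_eq K f g₁ (subset_refl _) (Finset.subset_union_left),
      kerIP_eq K f g₂ (subset_refl _) (Finset.subset_union_right),
      ← Finset.sum_add_distrib]
  refine Finset.sum_congr rfl fun x _ => ?_
  rw [← Finset.sum_add_distrib]
  refine Finset.sum_congr rfl fun y _ => ?_
  simp [Finsupp.add_apply, map_add]; ring

lemma kerIP_conj {X : Type*} {H : X → X → ℂ} (hH : IsHermitianKernel H) (f g : X →₀ ℂ) :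
    kerIP H g f = (starRingEnd ℂ) (kerIP H f g) := by
  unfold kerIP
  rw [map_sum, Finset.sum_comm]
  refine Finset.sum_congr rfl fun y _ => ?_
  rw [map_sum]
  refine Finset.sum_congr rfl fun x _ => ?_
  rw [map_mul, map_mul, Complex.conj_conj, ← hH x y]
  ring

lemma kerIP_re_nonneg {X : Type*} {L : X → X → ℂ} (hL : IsPSDKernel L) (f : X →₀ ℂ) :
    0 ≤ (kerIP L f f).re := ((Complex.nonneg_iff).mp (hL f)).1

lemma kerIP_real {X : Type*} {L : X → X → ℂ} (hL : IsPSDKernel L) (f : X →₀ ℂ) :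
    kerIP L f f = ((kerIP L f f).re : ℂ) := by
  have h := ((Complex.nonneg_iff).mp (hL f)).2
  exact Complex.ext rfl (by simp [h])

lemma kerIP_sub_left {X : Type*} (K : X → X → ℂ) (f₁ f₂ g : X →₀ ℂ) :
    kerIP K (f₁ - f₂) g = kerIP K f₁ g - kerIP K f₂ g := by
  rw [sub_eq_add_neg, kerIP_add_left, kerIP_neg_left, sub_eq_add_neg]

lemma kerIP_sub_right {X : Type*} (K : X → X → ℂ) (f g₁ g₂ : X →₀ ℂ) :
    kerIP K f (g₁ - g₂) = kerIP K f g₁ - kerIP K f g₂ := by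
  rw [sub_eq_add_neg, kerIP_add_right, kerIP_neg_right, sub_eq_add_neg]

lemma kerIP_expand_add {X : Type*} (K : X → X → ℂ) (f g : X →₀ ℂ) :
    kerIP K (f + g) (f + g) = kerIP K f f + kerIP K f g + kerIP K g f + kerIP K g g := by
  rw [kerIP_add_left, kerIP_add_right, kerIP_add_right]; ring

lemma kerIP_expand_sub {X : Type*} (K : X → X → ℂ) (f g : X →₀ ℂ) :
    kerIP K (f - g) (f - g) = kerIP K f f - kerIP K f g - kerIP K g f + kerIP K g g := by
  rw [kerIP_sub_left, kerIP_sub_right, kerIP_sub_right]; ring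

lemma lemA {X : Type*} (H L : X → X → ℂ) (hH : IsHermitianKernel H) (hL : IsPSDKernel L)
    (hyp : ∀ f : X →₀ ℂ, ‖kerIP H f f‖ ≤ (kerIP L f f).re) (f g : X →₀ ℂ) :
    2 * ‖kerIP H f g‖ ≤ (kerIP L f f).re + (kerIP L g g).re := by
  set B := kerIP H f g with hB
  rcases eq_or_ne B 0 with h0 | h0
  · rw [h0]
    simp only [norm_zero, mul_zero]
    exact add_nonneg (kerIP_re_nonneg hL f) (kerIP_re_nonneg hL g)
  · set c : ℂ := (‖B‖ : ℂ) / B with hc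
    have hcB : c * B = (‖B‖ : ℂ) := by
      rw [hc, div_mul_cancel₀ _ h0]
    have hcc : c * (starRingEnd ℂ) c = 1 := by
      have : ‖c‖ = 1 := by
        simp [hc, norm_div, Complex.norm_real, norm_norm,
          div_self (norm_ne_zero_iff.mpr h0)]
      rw [Complex.mul_conj, ← Complex.sq_norm, this]; norm_num
    set f' : X →₀ ℂ := c • f with hf'
    have hf'g : kerIP H f' g = (‖B‖ : ℂ) := by
      rw [hf', kerIP_smul_left, ← hB, hcB]
    have hgf' : kerIP H g f' = (‖B‖ : ℂ) := by
      rw [kerIP_conj hH, hf'g, Complex.conj_ofReal]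
    have hQf' : kerIP L f' f' = kerIP L f f := by
      rw [hf', kerIP_smul_left, kerIP_smul_right, ← mul_assoc, hcc, one_mul]
    -- key complex identity for H
    have hHkey : kerIP H (f' + g) (f' + g) - kerIP H (f' - g) (f' - g)
        = 4 * (‖B‖ : ℂ) := by
      rw [kerIP_expand_add, kerIP_expand_sub, hf'g, hgf']; ring
    -- parallelogram for L
    have hLkey : kerIP L (f' + g) (f' + g) + kerIP L (f' - g) (f' - g)
        = 2 * kerIP L f' f' + 2 * kerIP L g g := by
      rw [kerIP_expand_add, kerIP_expand_sub]; ring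
    have h4 : 4 * ‖B‖
        = (kerIP H (f' + g) (f' + g)).re - (kerIP H (f' - g) (f' - g)).re := by
      have := congrArg Complex.re hHkey
      simpa [Complex.sub_re, Complex.mul_re] using this.symm
    have hre1 : (kerIP H (f' + g) (f' + g)).re ≤ (kerIP L (f' + g) (f' + g)).re :=
      le_trans (Complex.re_le_norm _) (hyp _)
    have hre2 : -(kerIP H (f' - g) (f' - g)).re ≤ (kerIP L (f' - g) (f' - g)).re := by
      have h1 : -(kerIP H (f' - g) (f' - g)).re ≤ ‖kerIP H (f' - g) (f' - g)‖ := by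
        have := Complex.abs_re_le_norm (kerIP H (f' - g) (f' - g))
        cases abs_cases (kerIP H (f' - g) (f' - g)).re with
        | inl h => linarith [h.1 ▸ this, norm_nonneg (kerIP H (f' - g) (f' - g))]
        | inr h => linarith [h.1 ▸ this]
      exact le_trans h1 (hyp _)
    have hLre : (kerIP L (f' + g) (f' + g)).re + (kerIP L (f' - g) (f' - g)).re
        = 2 * (kerIP L f f).re + 2 * (kerIP L g g).re := by
      have := congrArg Complex.re hLkey
      rw [hQf'] at this
      simpa [Complex.add_re, Complex.mul_re] using this
    linarith [h4, hre1, hre2, hLre]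

/-- For a Hermitian kernel `H` and a positive semidefinite kernel `L` on a
nonempty set `X`, one has `|[f,f]_H| ≤ [f,f]_L` for all finitely supported `f` if and only if
`|[f,g]_H|² ≤ [f,f]_L ⬝ [g,g]_L` for all finitely supported `f, g`. -/
theorem stmt0 {X : Type*} [Nonempty X] (H L : X → X → ℂ)
    (hH : IsHermitianKernel H) (hL : IsPSDKernel L) :
    (∀ f : X →₀ ℂ, ‖kerIP H f f‖ ≤ (kerIP L f f).re) ↔
      (∀ f g : X →₀ ℂ,
        ‖kerIP H f g‖ ^ 2 ≤ (kerIP L f f).re * (kerIP L g g).re) := by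
  constructor
  · intro hyp f g
    set a := (kerIP L f f).re with ha'
    set b := (kerIP L g g).re with hb'
    have ha : 0 ≤ a := kerIP_re_nonneg hL f
    have hb : 0 ≤ b := kerIP_re_nonneg hL g
    set M := ‖kerIP H f g‖ with hM
    have hM0 : 0 ≤ M := norm_nonneg _
    have key : ∀ t : ℝ, 0 ≤ t → 2 * (t * M) ≤ t ^ 2 * a + b := by
      intro t ht
      have h := lemA H L hH hL hyp ((t : ℂ) • f) g
      rw [kerIP_smul_left, kerIP_smul_left, kerIP_smul_right] at h
      simp only [map_mul, norm_mul, Complex.norm_real, Real.norm_eq_abs, abs_of_nonneg ht, Complex.conj_ofReal,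
        ← mul_assoc] at h
      have hre : (((t : ℂ) * (t : ℂ)) * kerIP L f f).re = t ^ 2 * a := by
        rw [← Complex.ofReal_mul, Complex.re_ofReal_mul, ← ha']; ring
      rw [hre] at h
      linarith
    rcases eq_or_lt_of_le ha with ha0 | ha0
    · -- a = 0 : show M = 0
      have hM0' : M = 0 := by
        by_contra hne
        have hMpos : 0 < M := lt_of_le_of_ne hM0 (Ne.symm hne)
        have h := key ((b + 1) / M) (by positivity)
        rw [← ha0] at h
        have : (b + 1) / M * M = b + 1 := div_mul_cancel₀ _ (ne_of_gt hMpos)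
        nlinarith
      rw [hM0', ← ha0]; norm_num
    · have h := key (M / a) (by positivity)
      have e1 : M / a * M = M ^ 2 / a := by ring
      have e2 : (M / a) ^ 2 * a = M ^ 2 / a := by field_simp
      rw [e2] at h
      rw [e1] at h
      have : M ^ 2 / a ≤ b := by linarith
      calc M ^ 2 = (M ^ 2 / a) * a := by field_simp
        _ ≤ b * a := mul_le_mul_of_nonneg_right this ha
        _ = a * b := mul_comm _ _
  · intro hyp f
    have h := hyp f f
    have ha : 0 ≤ (kerIP L f f).re := kerIP_re_nonneg hL f
    nlinarith [norm_nonneg (kerIP H f f)]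
end

section
/- Let X be a nonempty set, H a Hermitian kernel on X, 𝓚 a complex Hilbert space, J a fundamental symmetry on 𝓚, and v : X → 𝓚 a map such that H(x,y) = ⟨J v(y), v(x)⟩_𝓚 for all x, y ∈ X. Then the kernel L on X defined by L(x,y) = ⟨v(y), v(x)⟩_𝓚 is positive semidefinite and both L − H and L + H are positive semidefinite. -/
open scoped ComplexOrder

/-- If `(𝓚, J, v)` is a linearisation of the Hermitian kernel `H`,
i.e. `H(x,y) = ⟨J v(y), v(x)⟩` (in Mathlib's convention `inner ℂ (v x) (J (v y))`), then the
kernel `L(x,y) = ⟨v(y), v(x)⟩ = inner ℂ (v x) (v y)` is positive semidefinite and both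
`L − H` and `L + H` are positive semidefinite. -/
lemma kerIP_op {X : Type*} {𝓚 : Type*} [NormedAddCommGroup 𝓚] [InnerProductSpace ℂ 𝓚]
    (A : 𝓚 →L[ℂ] 𝓚) (v : X → 𝓚) (f : X →₀ ℂ) :
    kerIP (fun x y => (inner ℂ (v x) (A (v y)) : ℂ)) f f
      = inner ℂ (∑ x ∈ f.support, f x • v x) (A (∑ y ∈ f.support, f y • v y)) := by
  simp only [kerIP, map_sum, map_smul, inner_sum, sum_inner, inner_smul_left, inner_smul_right]
  rw [Finset.sum_comm]
  simp only [Finset.mul_sum]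
  exact Finset.sum_congr rfl fun _ _ => Finset.sum_congr rfl fun _ _ => by ring

lemma psd_of_sq {𝓚 : Type*} [NormedAddCommGroup 𝓚] [InnerProductSpace ℂ 𝓚] [CompleteSpace 𝓚]
    (B : 𝓚 →L[ℂ] 𝓚) (hB : IsSelfAdjoint B) (hB2 : B ∘L B = (2 : ℂ) • B) (w : 𝓚) :
    0 ≤ (inner ℂ w (B w) : ℂ) := by
  have h1 : (inner ℂ (B w) (B w) : ℂ) = inner ℂ w (B (B w)) := hB.isSymmetric w (B w)
  have h2 : B (B w) = (2 : ℂ) • B w := by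
    have := congrArg (fun T : 𝓚 →L[ℂ] 𝓚 => T w) hB2
    simpa using this
  have h3 : (inner ℂ w (B w) : ℂ) = (2 : ℂ)⁻¹ * inner ℂ (B w) (B w) := by
    rw [h1, h2, inner_smul_right]; ring
  rw [h3, inner_self_eq_norm_sq_to_K]
  have h4 : (0:ℝ) ≤ 2⁻¹ * ‖B w‖^2 := by positivity
  norm_cast
  refine mul_nonneg ?_ ?_
  · rw [show ((2:ℂ)⁻¹ : ℂ) = ((2⁻¹ : ℝ) : ℂ) from by norm_num]
    exact Complex.zero_le_real.mpr (by norm_num)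
  · exact Complex.zero_le_real.mpr (by positivity)

lemma inner_self_nn {𝓚 : Type*} [NormedAddCommGroup 𝓚] [InnerProductSpace ℂ 𝓚] (w : 𝓚) :
    0 ≤ (inner ℂ w w : ℂ) := by
  rw [inner_self_eq_norm_sq_to_K]
  norm_cast
  exact Complex.zero_le_real.mpr (by positivity)

/-- If `(𝓚, J, v)` is a linearisation of the Hermitian kernel `H`,
i.e. `H(x,y) = ⟨J v(y), v(x)⟩` (in Mathlib's convention `inner (v x) (J (v y))`), then the
kernel `L(x,y) = ⟨v(y), v(x)⟩ = inner (v x) (v y)` is positive semidefinite and both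
`L − H` and `L + H` are positive semidefinite. -/
theorem stmt3 {X : Type*} [Nonempty X] {𝓚 : Type*} [NormedAddCommGroup 𝓚]
    [InnerProductSpace ℂ 𝓚] [CompleteSpace 𝓚]
    (H : X → X → ℂ) (hH : IsHermitianKernel H)
    (J : 𝓚 →L[ℂ] 𝓚) (hJsa : IsSelfAdjoint J)
    (hJsq : J ∘L J = ContinuousLinearMap.id ℂ 𝓚)
    (v : X → 𝓚) (hrep : ∀ x y, H x y = (inner ℂ (v x) (J (v y)) : ℂ)) :
    IsPSDKernel (fun x y => (inner ℂ (v x) (v y) : ℂ)) ∧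
    IsPSDKernel (fun x y => (inner ℂ (v x) (v y) : ℂ) - H x y) ∧
    IsPSDKernel (fun x y => (inner ℂ (v x) (v y) : ℂ) + H x y) := by
  have hJJ : ∀ w : 𝓚, J (J w) = w := fun w => by
    have := congrArg (fun T : 𝓚 →L[ℂ] 𝓚 => T w) hJsq
    simpa using this
  have h1sa : IsSelfAdjoint (1 : 𝓚 →L[ℂ] 𝓚) := IsSelfAdjoint.one _
  refine ⟨?_, ?_, ?_⟩
  · intro f
    have hker : (fun x y => (inner ℂ (v x) (v y) : ℂ))
        = fun x y => (inner ℂ (v x) ((1 : 𝓚 →L[ℂ] 𝓚) (v y)) : ℂ) := by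
      funext x y; simp
    rw [hker, kerIP_op]
    exact inner_self_nn _
  · intro f
    have hker : (fun x y => (inner ℂ (v x) (v y) : ℂ) - H x y)
        = fun x y => (inner ℂ (v x) ((1 - J) (v y)) : ℂ) := by
      funext x y
      rw [hrep]
      simp [inner_sub_right]
    have hB2 : (1 - J) ∘L (1 - J) = (2 : ℂ) • (1 - J) := by
      ext w
      simp [ContinuousLinearMap.comp_apply, map_sub, hJJ, two_smul, smul_sub]
      abel
    rw [hker, kerIP_op]
    exact psd_of_sq _ (h1sa.sub hJsa) hB2 _
  · intro f
    have hker : (fun x y => (inner ℂ (v x) (v y) : ℂ) + H x y)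
        = fun x y => (inner ℂ (v x) ((1 + J) (v y)) : ℂ) := by
      funext x y
      rw [hrep]
      simp [inner_add_right]
    have hB2 : (1 + J) ∘L (1 + J) = (2 : ℂ) • (1 + J) := by
      ext w
      simp [ContinuousLinearMap.comp_apply, map_add, hJJ, two_smul, smul_add]
      abel
    rw [hker, kerIP_op]
    exact psd_of_sq _ (h1sa.add hJsa) hB2 _
end

section
/- Let X be a nonempty set, K a Hermitian kernel on X, and let (𝓚, J, v) be a minimal linearisation of K. Define Φ : 𝓚 → (X → ℂ) by Φ(k)(x) = ⟨J k, v(x)⟩_𝓚. Then: (a) Φ is an injective linear map; (b) for every y ∈ X, Φ(v(y)) is the function x ↦ K(x,y), so (𝓚, J, Φ) is a reproducing kernel Kreĭn space on X with reproducing kernel K; (c) if (𝓚₁, J₁, v₁) and (𝓚₂, J₂, v₂) are unitarily equivalent minimal linearisations of K via the unitary Φ₀ : 𝓚₁ → 𝓚₂, then the associated maps satisfy Φ₂ ∘ Φ₀ = Φ₁, so the two reproducing kernel Kreĭn spaces have the same range of functions and the same transported inner products. -/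
open scoped ComplexOrder

private lemma stmt4_inj {X : Type*} {𝓚 : Type*} [NormedAddCommGroup 𝓚]
    [InnerProductSpace ℂ 𝓚] (J : 𝓚 →L[ℂ] 𝓚)
    (hJsq : J ∘L J = ContinuousLinearMap.id ℂ 𝓚) (v : X → 𝓚)
    (hmin : Dense (Submodule.span ℂ (Set.range v) : Set 𝓚)) {k : 𝓚}
    (h : ∀ x, (inner ℂ (v x) (J k) : ℂ) = 0) : k = 0 := by
  have hspan : ∀ u ∈ Submodule.span ℂ (Set.range v), (inner ℂ u (J k) : ℂ) = 0 := by
    intro u hu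
    induction hu using Submodule.span_induction with
    | mem u hu => obtain ⟨x, rfl⟩ := hu; exact h x
    | zero => simp
    | add u w _ _ hu hw => rw [inner_add_left, hu, hw]; ring
    | smul c u _ hu => rw [inner_smul_left, hu]; ring
  have hall : ∀ u : 𝓚, (inner ℂ u (J k) : ℂ) = 0 := by
    have hc : Continuous fun u : 𝓚 => (inner ℂ u (J k) : ℂ) :=
      Continuous.inner continuous_id continuous_const
    have heq := Continuous.ext_on hmin hc continuous_const (fun u hu => hspan u hu)
    exact fun u => congrFun heq u
  have hJk : J k = 0 := inner_self_eq_zero.mp (hall (J k))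
  have hk : J (J k) = k := congrFun (congrArg DFunLike.coe hJsq) k
  rw [hJk] at hk
  simpa using hk.symm

/-- For a minimal linearisation `(𝓚, J, v)` of a Hermitian kernel `K`, the map
`Φ(k)(x) = ⟨J k, v(x)⟩` (in Mathlib's convention `inner ℂ (v x) (J k)`, linear in `k`) is an
injective linear map with `Φ(v(y)) = K(·,y)`, so `(𝓚, J, Φ)` is a reproducing kernel Kreĭn
space with reproducing kernel `K`; moreover, for two unitarily equivalent minimal
linearisations via `Φ₀`, one has `Φ₂ ∘ Φ₀ = Φ₁`, the two spaces of functions coincide, and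
the transported indefinite inner ℂ products agree. -/
theorem stmt4 {X : Type*} [Nonempty X] (K : X → X → ℂ) (hK : IsHermitianKernel K)
    {𝓚₁ 𝓚₂ : Type*} [NormedAddCommGroup 𝓚₁] [InnerProductSpace ℂ 𝓚₁] [CompleteSpace 𝓚₁]
    [NormedAddCommGroup 𝓚₂] [InnerProductSpace ℂ 𝓚₂] [CompleteSpace 𝓚₂]
    (J₁ : 𝓚₁ →L[ℂ] 𝓚₁) (J₂ : 𝓚₂ →L[ℂ] 𝓚₂)
    (hJ₁sa : IsSelfAdjoint J₁) (hJ₁sq : J₁ ∘L J₁ = ContinuousLinearMap.id ℂ 𝓚₁)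
    (hJ₂sa : IsSelfAdjoint J₂) (hJ₂sq : J₂ ∘L J₂ = ContinuousLinearMap.id ℂ 𝓚₂)
    (v₁ : X → 𝓚₁) (v₂ : X → 𝓚₂)
    (hrep₁ : ∀ x y, K x y = (inner ℂ (v₁ x) (J₁ (v₁ y)) : ℂ))
    (hrep₂ : ∀ x y, K x y = (inner ℂ (v₂ x) (J₂ (v₂ y)) : ℂ))
    (hmin₁ : Dense (Submodule.span ℂ (Set.range v₁) : Set 𝓚₁))
    (hmin₂ : Dense (Submodule.span ℂ (Set.range v₂) : Set 𝓚₂))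
    (Φ₀ : 𝓚₁ →L[ℂ] 𝓚₂) (hΦ₀bij : Function.Bijective Φ₀)
    (hΦ₀iso : ∀ u w : 𝓚₁, (inner ℂ (Φ₀ w) (J₂ (Φ₀ u)) : ℂ) = inner ℂ w (J₁ u))
    (hΦ₀v : ∀ x, Φ₀ (v₁ x) = v₂ x) :
    -- (a), (b): `Φ₁` is an injective linear map and `Φ₁ (v₁ y) = K(·,y)`,
    -- so `(𝓚₁, J₁, Φ₁)` is a reproducing kernel Kreĭn space with reproducing kernel `K`
    (∃ Φ : 𝓚₁ →ₗ[ℂ] (X → ℂ),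
      (∀ k x, Φ k x = (inner ℂ (v₁ x) (J₁ k) : ℂ)) ∧ Function.Injective Φ ∧
      ∀ y, Φ (v₁ y) = fun x => K x y) ∧
    (∃ Φ : 𝓚₂ →ₗ[ℂ] (X → ℂ),
      (∀ k x, Φ k x = (inner ℂ (v₂ x) (J₂ k) : ℂ)) ∧ Function.Injective Φ ∧
      ∀ y, Φ (v₂ y) = fun x => K x y) ∧
    -- (c): `Φ₂ ∘ Φ₀ = Φ₁`
    ((fun k : 𝓚₁ => fun x => (inner ℂ (v₂ x) (J₂ (Φ₀ k)) : ℂ)) =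
      (fun k : 𝓚₁ => fun x => (inner ℂ (v₁ x) (J₁ k) : ℂ))) ∧
    -- same range of functions
    (Set.range (fun k : 𝓚₁ => fun x => (inner ℂ (v₁ x) (J₁ k) : ℂ)) =
      Set.range (fun k : 𝓚₂ => fun x => (inner ℂ (v₂ x) (J₂ k) : ℂ))) ∧
    -- same transported indefinite inner ℂ products
    (∀ (u w : 𝓚₁) (u' w' : 𝓚₂),
      (fun x => (inner ℂ (v₁ x) (J₁ u) : ℂ)) = (fun x => (inner ℂ (v₂ x) (J₂ u') : ℂ)) →
      (fun x => (inner ℂ (v₁ x) (J₁ w) : ℂ)) = (fun x => (inner ℂ (v₂ x) (J₂ w') : ℂ)) →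
      (inner ℂ w (J₁ u) : ℂ) = inner ℂ w' (J₂ u')) := by
  classical
  set Φ₁ : 𝓚₁ →ₗ[ℂ] (X → ℂ) :=
    { toFun := fun k => fun x => (inner ℂ (v₁ x) (J₁ k) : ℂ)
      map_add' := by intro a b; funext x; simp [inner_add_right]
      map_smul' := by intro c a; funext x; simp [inner_smul_right] } with hΦ₁def
  set Φ₂ : 𝓚₂ →ₗ[ℂ] (X → ℂ) :=
    { toFun := fun k => fun x => (inner ℂ (v₂ x) (J₂ k) : ℂ)
      map_add' := by intro a b; funext x; simp [inner_add_right]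
      map_smul' := by intro c a; funext x; simp [inner_smul_right] } with hΦ₂def
  have hΦ₁inj : Function.Injective Φ₁ := by
    rw [← LinearMap.ker_eq_bot, LinearMap.ker_eq_bot']
    intro k hk
    exact stmt4_inj J₁ hJ₁sq v₁ hmin₁ (fun x => congrFun hk x)
  have hΦ₂inj : Function.Injective Φ₂ := by
    rw [← LinearMap.ker_eq_bot, LinearMap.ker_eq_bot']
    intro k hk
    exact stmt4_inj J₂ hJ₂sq v₂ hmin₂ (fun x => congrFun hk x)
  have hcomp : (fun k : 𝓚₁ => fun x => (inner ℂ (v₂ x) (J₂ (Φ₀ k)) : ℂ)) =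
      (fun k : 𝓚₁ => fun x => (inner ℂ (v₁ x) (J₁ k) : ℂ)) := by
    funext k x
    rw [← hΦ₀v x]
    exact hΦ₀iso k (v₁ x)
  refine ⟨⟨Φ₁, fun k x => rfl, hΦ₁inj, fun y => funext fun x => (hrep₁ x y).symm⟩,
    ⟨Φ₂, fun k x => rfl, hΦ₂inj, fun y => funext fun x => (hrep₂ x y).symm⟩,
    hcomp, ?_, ?_⟩
  · ext f
    constructor
    · rintro ⟨k, rfl⟩
      exact ⟨Φ₀ k, congrFun hcomp k⟩
    · rintro ⟨k, rfl⟩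
      obtain ⟨k', rfl⟩ := hΦ₀bij.surjective k
      exact ⟨k', (congrFun hcomp k').symm⟩
  · intro u w u' w' hu hw
    have hu' : Φ₀ u = u' := by
      apply hΦ₂inj
      funext x
      show (inner ℂ (v₂ x) (J₂ (Φ₀ u)) : ℂ) = inner ℂ (v₂ x) (J₂ u')
      rw [congrFun (congrFun hcomp u) x]
      exact congrFun hu x
    have hw' : Φ₀ w = w' := by
      apply hΦ₂inj
      funext x
      show (inner ℂ (v₂ x) (J₂ (Φ₀ w)) : ℂ) = inner ℂ (v₂ x) (J₂ w')
      rw [congrFun (congrFun hcomp w) x]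
      exact congrFun hw x
    rw [← hu', ← hw']
    exact (hΦ₀iso u w).symm
end

section
/- Let X be a nonempty set, H a complex Hilbert space, 𝓚 a complex Hilbert space with a fundamental symmetry J, and ι : 𝓚 → (X → H) an injective linear map. For x ∈ X let E(x) : 𝓚 → H be the linear map E(x)f = (ι f)(x). Then the following are equivalent: (1) there exists a kernel K : X × X → L(H) such that for every y ∈ X and h ∈ H the function z ↦ K(z,y)h lies in the range of ι, and for every f ∈ 𝓚, x ∈ X and h ∈ H one has ⟨(ι f)(x), h⟩_H = ⟨J f, g⟩_𝓚 whenever ι g = K(·,x)h; (2) E(x) is continuous for every x ∈ X. In that case the kernel K is uniquely determined, namely K(x,y) = E(x) ∘ J ∘ E(y)* for all x, y ∈ X, where E(y)* : H → 𝓚 is the Hilbert space adjoint of E(y). -/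
/-- Let `𝓚` (with fundamental symmetry `J`) be a Kreĭn space of `H`-valued
functions on `X`, realised by the injective linear map `ι : 𝓚 → (X → H)`, and let
`E(x) f = (ι f)(x)` be the evaluation maps. Then `𝓚` has a reproducing kernel
(condition (1)) if and only if every `E(x)` is continuous (condition (2)); in that case the
reproducing kernel is uniquely determined by `K(x,y) = E(x) ∘ J ∘ E(y)*`.
(Inner products `⟨a,b⟩` of the statement, linear in `a`, are rendered as `inner b a` in
Mathlib's convention.) -/
theorem stmt5 {X : Type*} [Nonempty X]
    {H : Type*} [NormedAddCommGroup H] [InnerProductSpace ℂ H] [CompleteSpace H]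
    {𝓚 : Type*} [NormedAddCommGroup 𝓚] [InnerProductSpace ℂ 𝓚] [CompleteSpace 𝓚]
    (J : 𝓚 →L[ℂ] 𝓚) (hJsa : IsSelfAdjoint J)
    (hJsq : J ∘L J = ContinuousLinearMap.id ℂ 𝓚)
    (ι : 𝓚 →ₗ[ℂ] (X → H)) (hι : Function.Injective ι) :
    -- (1) ↔ (2)
    ((∃ K : X → X → (H →L[ℂ] H),
        (∀ (y : X) (h : H), ∃ g : 𝓚, ι g = fun z => K z y h) ∧
        (∀ (f g : 𝓚) (x : X) (h : H), ι g = (fun z => K z x h) →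
          (inner ℂ h (ι f x) : ℂ) = inner ℂ g (J f))) ↔
      (∀ x : X, Continuous fun f : 𝓚 => ι f x)) ∧
    -- uniqueness and the formula `K(x,y) = E(x) ∘ J ∘ E(y)*`
    (∀ K : X → X → (H →L[ℂ] H),
      (∀ (y : X) (h : H), ∃ g : 𝓚, ι g = fun z => K z y h) →
      (∀ (f g : 𝓚) (x : X) (h : H), ι g = (fun z => K z x h) →
        (inner ℂ h (ι f x) : ℂ) = inner ℂ g (J f)) →
      ∀ E : X → (𝓚 →L[ℂ] H), (∀ (z : X) (f : 𝓚), E z f = ι f z) →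
        ∀ x y : X, K x y =
          (E x).comp (J.comp (ContinuousLinearMap.adjoint (E y)))) := by
  have hJJ : ∀ a : 𝓚, J (J a) = a := by
    intro a
    have := congrArg (fun T : 𝓚 →L[ℂ] 𝓚 => T a) hJsq
    simpa using this
  have hJinner : ∀ a b : 𝓚, (inner ℂ (J a) b : ℂ) = inner ℂ a (J b) := by
    intro a b
    conv_lhs => rw [← hJsa.adjoint_eq]
    exact ContinuousLinearMap.adjoint_inner_left J b a
  constructor
  · constructor
    · -- (1) → (2)
      rintro ⟨K, hK1, hK2⟩ x
      let T : 𝓚 →ₗ[ℂ] H := (LinearMap.proj x).comp ι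
      have hT : Continuous T := by
        apply LinearMap.continuous_of_seq_closed_graph
        intro u f v hu hv
        apply ext_inner_left ℂ
        intro h
        obtain ⟨g, hg⟩ := hK1 x h
        have key : ∀ f : 𝓚, (inner ℂ h (T f) : ℂ) = inner ℂ (J g) f := by
          intro f
          rw [hJinner]
          exact hK2 f g x h hg
        have l1 : Filter.Tendsto (fun n => (inner ℂ h (T (u n)) : ℂ))
            Filter.atTop (nhds (inner ℂ h v)) :=
          Filter.Tendsto.inner tendsto_const_nhds hv
        have l2 : Filter.Tendsto (fun n => (inner ℂ h (T (u n)) : ℂ))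
            Filter.atTop (nhds (inner ℂ h (T f))) := by
          simp only [key]
          exact Filter.Tendsto.inner tendsto_const_nhds hu
        exact tendsto_nhds_unique l1 l2
      exact hT
    · -- (2) → (1)
      intro hcont
      set E : X → (𝓚 →L[ℂ] H) :=
        fun x => ⟨(LinearMap.proj x).comp ι, hcont x⟩ with hE
      refine ⟨fun x y => (E x).comp (J.comp (ContinuousLinearMap.adjoint (E y))),
        ?_, ?_⟩
      · intro y h
        exact ⟨J (ContinuousLinearMap.adjoint (E y) h), by funext z; rfl⟩
      · intro f g x h hg
        have hg' : g = J (ContinuousLinearMap.adjoint (E x) h) := by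
          apply hι
          rw [hg]
          funext z; rfl
        subst hg'
        rw [hJinner, hJJ, ContinuousLinearMap.adjoint_inner_left]
        rfl
  · -- uniqueness
    intro K hK1 hK2 E hE x y
    ext h
    obtain ⟨g, hg⟩ := hK1 y h
    have hg2 : J g = ContinuousLinearMap.adjoint (E y) h := by
      apply ext_inner_right ℂ
      intro f
      rw [hJinner, ← hK2 f g y h hg, ContinuousLinearMap.adjoint_inner_left, hE]
    calc K x y h = ι g x := (congrFun hg x).symm
      _ = E x g := (hE x g).symm
      _ = E x (J (J g)) := by rw [hJJ]
      _ = E x (J (ContinuousLinearMap.adjoint (E y) h)) := by rw [hg2]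
      _ = ((E x).comp (J.comp (ContinuousLinearMap.adjoint (E y)))) h := rfl
end

section
/- Let X be a nonempty set and H a Hermitian kernel on X with finite negative signature κ₋(H) < ∞. Then any two minimal linearisations (𝓚₁, J₁, v₁) and (𝓚₂, J₂, v₂) of H in which ker(J₁ + I) and ker(J₂ + I) are finite dimensional are unitarily equivalent. -/
open scoped ComplexOrder

/-- The negative signature `κ₋(K)` of a Hermitian kernel: the supremum, in `ℕ∞`, of the
dimensions of subspaces `N` of finitely supported functions on which `[f,f]_K < 0` for all
nonzero `f ∈ N`. -/
noncomputable def negSig {X : Type*} (K : X → X → ℂ) : ℕ∞ :=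
  ⨆ N ∈ {N : Submodule ℂ (X →₀ ℂ) | ∀ f ∈ N, f ≠ 0 → kerIP K f f < 0},
    (Module.rank ℂ N).toENat

open Filter Topology

local notation "⟪" x ", " y "⟫" => @inner ℂ _ _ x y

private lemma sa_swap {𝓚 : Type*} [NormedAddCommGroup 𝓚] [InnerProductSpace ℂ 𝓚]
    [CompleteSpace 𝓚] {J : 𝓚 →L[ℂ] 𝓚} (h : IsSelfAdjoint J) (x y : 𝓚) :
    ⟪J x, y⟫ = ⟪x, J y⟫ := by
  conv_lhs => rw [← ContinuousLinearMap.isSelfAdjoint_iff'.mp h]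
  exact ContinuousLinearMap.adjoint_inner_left J y x

set_option maxHeartbeats 2000000 in
/-- Main auxiliary lemma: existence of a bounded map intertwining the two linearisations. -/
private lemma aux_exists {X : Type*} {𝓚₁ 𝓚₂ : Type*}
    [NormedAddCommGroup 𝓚₁] [InnerProductSpace ℂ 𝓚₁] [CompleteSpace 𝓚₁]
    [NormedAddCommGroup 𝓚₂] [InnerProductSpace ℂ 𝓚₂] [CompleteSpace 𝓚₂]
    (J₁ : 𝓚₁ →L[ℂ] 𝓚₁) (J₂ : 𝓚₂ →L[ℂ] 𝓚₂)
    (hJ₂sa : IsSelfAdjoint J₂) (hJ₂sq : J₂ ∘L J₂ = ContinuousLinearMap.id ℂ 𝓚₂)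
    (v₁ : X → 𝓚₁) (v₂ : X → 𝓚₂)
    (hIP : ∀ f g : X →₀ ℂ,
      ⟪Finsupp.linearCombination ℂ v₂ g, J₂ (Finsupp.linearCombination ℂ v₂ f)⟫
        = ⟪Finsupp.linearCombination ℂ v₁ g, J₁ (Finsupp.linearCombination ℂ v₁ f)⟫)
    (hmin₁ : Dense (Submodule.span ℂ (Set.range v₁) : Set 𝓚₁))
    (hmin₂ : Dense (Submodule.span ℂ (Set.range v₂) : Set 𝓚₂))
    (hfin₂ : FiniteDimensional ℂ (LinearMap.ker (J₂ + ContinuousLinearMap.id ℂ 𝓚₂).toLinearMap)) :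
    ∃ Φ : 𝓚₁ →L[ℂ] 𝓚₂, ∀ f : X →₀ ℂ,
      Φ (Finsupp.linearCombination ℂ v₁ f) = Finsupp.linearCombination ℂ v₂ f := by
  set T₁ := Finsupp.linearCombination ℂ v₁ with hT₁
  set T₂ := Finsupp.linearCombination ℂ v₂ with hT₂
  have hJsw := sa_swap hJ₂sa
  have hJsq' : ∀ z, J₂ (J₂ z) = z := fun z => by
    have := ContinuousLinearMap.ext_iff.mp hJ₂sq z
    simpa using this
  -- the negative projection (as a plain function)
  set p : 𝓚₂ → 𝓚₂ := fun z => (2⁻¹ : ℂ) • (z - J₂ z) with hp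
  have hJp : ∀ z, J₂ (p z) = - p z := by
    intro z
    simp only [hp, map_smul, map_sub, hJsq' z, smul_sub, neg_sub, ← smul_neg, neg_sub]
  have hpp : ∀ z, p (p z) = p z := by
    intro z
    have : p (p z) = (2⁻¹ : ℂ) • (p z - J₂ (p z)) := rfl
    rw [this, hJp z, sub_neg_eq_add, smul_add]
    module
  have hpsa : ∀ y z, ⟪p y, z⟫ = ⟪y, p z⟫ := by
    intro y z
    simp only [hp, inner_smul_left, inner_smul_right, inner_sub_left, inner_sub_right,
      hJsw, map_inv₀, map_ofNat]
  have hpmem : ∀ z, p z ∈ LinearMap.ker (J₂ + ContinuousLinearMap.id ℂ 𝓚₂).toLinearMap := by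
    intro z
    simp only [LinearMap.mem_ker, ContinuousLinearMap.coe_coe, ContinuousLinearMap.add_apply,
      ContinuousLinearMap.id_apply, hJp z, neg_add_cancel]
  have hpsmul : ∀ (c : ℂ) z, p (c • z) = c • p z := by
    intro c z
    simp only [hp, map_smul, smul_sub, smul_comm c]
  -- norm identity
  have hnorm : ∀ z : 𝓚₂, ‖z‖ ^ 2 = (⟪z, J₂ z⟫).re + 2 * ‖p z‖ ^ 2 := by
    intro z
    have h2p : J₂ z = z - (2 : ℂ) • p z := by
      simp only [hp, smul_smul]; norm_num
    have hzp : ⟪z, p z⟫ = ⟪p z, p z⟫ := by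
      conv_lhs => rw [← hpp z, ← hpsa]
    rw [h2p, inner_sub_right, inner_smul_right, hzp]
    simp [inner_self_eq_norm_sq_to_K, Complex.sub_re, Complex.mul_re,
      ← Complex.ofReal_pow]
  -- Step B: uniform bound on the negative part
  have hC : ∃ C : ℝ, ∀ f : X →₀ ℂ, ‖p (T₂ f)‖ ≤ C * ‖T₁ f‖ := by
    by_contra hno
    push_neg at hno
    choose F hF using hno
    set f : ℕ → (X →₀ ℂ) := fun n => F (n : ℝ) with hf
    set c : ℕ → ℝ := fun n => ‖p (T₂ (f n))‖ with hc
    have hcpos : ∀ n, 0 < c n := fun n =>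
      lt_of_le_of_lt (by positivity) (hF (n : ℝ))
    set g : ℕ → (X →₀ ℂ) := fun n => (((c n : ℝ) : ℂ))⁻¹ • f n with hg
    have hT2g : ∀ n, T₂ (g n) = (((c n : ℝ) : ℂ))⁻¹ • T₂ (f n) := fun n => map_smul _ _ _
    have hgp : ∀ n, ‖p (T₂ (g n))‖ = 1 := by
      intro n
      rw [hT2g, hpsmul, norm_smul, norm_inv, Complex.norm_real, Real.norm_eq_abs,
        abs_of_pos (hcpos n)]
      exact inv_mul_cancel₀ (hcpos n).ne'
    have hT1g : ∀ n, ‖T₁ (g n)‖ = (c n)⁻¹ * ‖T₁ (f n)‖ := by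
      intro n
      rw [map_smul, norm_smul, norm_inv, Complex.norm_real, Real.norm_eq_abs, abs_of_pos (hcpos n)]
    have hT1g0 : Tendsto (fun n => T₁ (g n)) atTop (𝓝 0) := by
      apply squeeze_zero_norm' (a := fun n : ℕ => 1 / (n : ℝ))
        ?_ tendsto_one_div_atTop_nhds_zero_nat
      filter_upwards [eventually_ge_atTop 1] with n hn
      have hn' : (0 : ℝ) < n := by exact_mod_cast hn
      have hFn := (hF (n : ℝ)).le
      rw [hT1g, one_div, inv_mul_le_iff₀ (hcpos n)]
      calc ‖T₁ (f n)‖ = (n : ℝ)⁻¹ * ((n : ℝ) * ‖T₁ (f n)‖) := by field_simp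
        _ ≤ (n : ℝ)⁻¹ * c n := by gcongr
        _ = c n * (n : ℝ)⁻¹ := by ring
    -- weak convergence of T₂ (g n) to 0
    have h1 : ∀ h : X →₀ ℂ,
        Tendsto (fun n => ⟪T₂ h, J₂ (T₂ (g n))⟫) atTop (𝓝 0) := by
      intro h
      have h1a : Tendsto (fun n => ⟪T₁ h, J₁ (T₁ (g n))⟫) atTop (𝓝 0) := by
        have hz : Tendsto (fun n => J₁ (T₁ (g n))) atTop (𝓝 0) := by
          have := (J₁.continuous.tendsto 0).comp hT1g0
          simpa [Function.comp_def] using this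
        have := Filter.Tendsto.inner (𝕜 := ℂ)
          (tendsto_const_nhds : Tendsto (fun _ : ℕ => T₁ h) atTop (𝓝 (T₁ h))) hz
        simpa using this
      exact h1a.congr fun n => (hIP (g n) h).symm
    have h2 : ∀ w ∈ Submodule.span ℂ (Set.range v₂),
        Tendsto (fun n => ⟪w, J₂ (T₂ (g n))⟫) atTop (𝓝 0) := by
      intro w hw
      rw [← Finsupp.range_linearCombination, ← hT₂] at hw
      obtain ⟨h, rfl⟩ := hw
      exact h1 h
    -- eventual norm bound
    set B' : ℝ := ‖J₂‖ * Real.sqrt (‖J₁‖ + 2) with hB'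
    have hB'0 : 0 ≤ B' := by positivity
    have hbdd : ∀ᶠ n in atTop, ‖J₂ (T₂ (g n))‖ ≤ B' := by
      have hT1n0 : Tendsto (fun n => ‖T₁ (g n)‖) atTop (𝓝 0) := by
        simpa using hT1g0.norm
      filter_upwards [hT1n0.eventually_le_const (by norm_num : (0:ℝ) < 1)] with n hn
      have hsq : ‖T₂ (g n)‖ ^ 2 ≤ ‖J₁‖ + 2 := by
        have e1 : ‖T₂ (g n)‖ ^ 2 = (⟪T₁ (g n), J₁ (T₁ (g n))⟫).re + 2 := by
          rw [hnorm (T₂ (g n)), hIP (g n) (g n), hgp n]; norm_num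
        have e2 : (⟪T₁ (g n), J₁ (T₁ (g n))⟫).re ≤ ‖J₁‖ := by
          calc (⟪T₁ (g n), J₁ (T₁ (g n))⟫).re ≤ ‖(⟪T₁ (g n), J₁ (T₁ (g n))⟫ : ℂ)‖ :=
                Complex.re_le_norm _
            _ ≤ ‖T₁ (g n)‖ * ‖J₁ (T₁ (g n))‖ := norm_inner_le_norm _ _
            _ ≤ ‖T₁ (g n)‖ * (‖J₁‖ * ‖T₁ (g n)‖) := by
                gcongr; exact J₁.le_opNorm _
            _ ≤ ‖J₁‖ := by
                nlinarith [norm_nonneg (T₁ (g n)), norm_nonneg J₁, hn,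
                  mul_nonneg (mul_nonneg (sub_nonneg.2 hn)
                    (by positivity : (0:ℝ) ≤ 1 + ‖T₁ (g n)‖)) (norm_nonneg J₁)]
        linarith
      have hT2n : ‖T₂ (g n)‖ ≤ Real.sqrt (‖J₁‖ + 2) := by
        rw [← Real.sqrt_sq (norm_nonneg (T₂ (g n)))]
        exact Real.sqrt_le_sqrt hsq
      calc ‖J₂ (T₂ (g n))‖ ≤ ‖J₂‖ * ‖T₂ (g n)‖ := J₂.le_opNorm _
        _ ≤ ‖J₂‖ * Real.sqrt (‖J₁‖ + 2) := by gcongr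
    have h3 : ∀ y : 𝓚₂, Tendsto (fun n => ⟪y, J₂ (T₂ (g n))⟫) atTop (𝓝 0) := by
      intro y
      rw [Metric.tendsto_atTop]
      intro ε hε
      have hy : y ∈ closure (Submodule.span ℂ (Set.range v₂) : Set 𝓚₂) := by
        rw [hmin₂.closure_eq]; trivial
      obtain ⟨w, hwmem, hwd⟩ := Metric.mem_closure_iff.mp hy (ε / (2 * (B' + 1)))
        (div_pos hε (by linarith))
      obtain ⟨N₂, hN₂⟩ := (Metric.tendsto_atTop.mp (h2 w hwmem)) (ε / 2) (half_pos hε)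
      obtain ⟨N₃, hN₃⟩ := eventually_atTop.mp hbdd
      refine ⟨max N₂ N₃, fun n hn => ?_⟩
      have hn₂ : N₂ ≤ n := le_trans (le_max_left _ _) hn
      have hn₃ : N₃ ≤ n := le_trans (le_max_right _ _) hn
      have e1 : (⟪y, J₂ (T₂ (g n))⟫ : ℂ)
          = ⟪w, J₂ (T₂ (g n))⟫ + ⟪y - w, J₂ (T₂ (g n))⟫ := by
        rw [inner_sub_left]; ring
      have e2 : ‖(⟪y - w, J₂ (T₂ (g n))⟫ : ℂ)‖ ≤ (ε / (2 * (B' + 1))) * B' := by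
        calc ‖(⟪y - w, J₂ (T₂ (g n))⟫ : ℂ)‖ ≤ ‖y - w‖ * ‖J₂ (T₂ (g n))‖ :=
              norm_inner_le_norm _ _
          _ ≤ (ε / (2 * (B' + 1))) * B' := by
              apply mul_le_mul ?_ (hN₃ n hn₃) (norm_nonneg _)
                (div_nonneg hε.le (by linarith))
              rw [← dist_eq_norm]; exact hwd.le
      have e3 : dist (⟪w, J₂ (T₂ (g n))⟫ : ℂ) 0 < ε / 2 := hN₂ n hn₂
      rw [dist_zero_right] at e3 ⊢
      have e4 : (ε / (2 * (B' + 1))) * B' ≤ ε / 2 := by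
        have hq : 0 ≤ ε / (2 * (B' + 1)) := div_nonneg hε.le (by linarith)
        have hne : B' + 1 ≠ 0 := by linarith
        calc (ε / (2 * (B' + 1))) * B' ≤ (ε / (2 * (B' + 1))) * (B' + 1) :=
              mul_le_mul_of_nonneg_left (by linarith) hq
          _ = ε / 2 := by field_simp
      calc ‖(⟪y, J₂ (T₂ (g n))⟫ : ℂ)‖
          ≤ ‖(⟪w, J₂ (T₂ (g n))⟫ : ℂ)‖ + ‖(⟪y - w, J₂ (T₂ (g n))⟫ : ℂ)‖ := by
            rw [e1]; exact norm_add_le _ _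
        _ < ε / 2 + ε / 2 := by
            apply add_lt_add_of_lt_of_le e3 (e2.trans e4)
        _ = ε := by ring
    have hw : ∀ y : 𝓚₂, Tendsto (fun n => ⟪y, T₂ (g n)⟫) atTop (𝓝 0) := by
      intro y
      refine (h3 (J₂ y)).congr fun n => ?_
      rw [hJsw, hJsq']
    -- contradiction via the finite-dimensional negative subspace
    set M := LinearMap.ker (J₂ + ContinuousLinearMap.id ℂ 𝓚₂).toLinearMap with hM
    set b := stdOrthonormalBasis ℂ M with hb
    set w : ℕ → M := fun n => ⟨p (T₂ (g n)), hpmem _⟩ with hwdef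
    have hw1 : ∀ n, (⟪w n, w n⟫ : ℂ) = 1 := by
      intro n
      rw [inner_self_eq_norm_sq_to_K]
      have : ‖w n‖ = 1 := by
        rw [show ‖w n‖ = ‖p (T₂ (g n))‖ from rfl, hgp n]
      rw [this]; norm_num
    have hterm : ∀ i, Tendsto (fun n => (⟪w n, b i⟫ : ℂ) * ⟪b i, w n⟫) atTop (𝓝 0) := by
      intro i
      have h5 : Tendsto (fun n => (⟪b i, w n⟫ : ℂ)) atTop (𝓝 0) := by
        refine (hw (p ((b i : M) : 𝓚₂))).congr fun n => ?_
        rw [Submodule.coe_inner, show ((w n : M) : 𝓚₂) = p (T₂ (g n)) from rfl, ← hpsa]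
      have h6 : Tendsto (fun n => (⟪w n, b i⟫ : ℂ)) atTop (𝓝 0) := by
        have := (Complex.continuous_conj.tendsto (0 : ℂ)).comp h5
        simp only [map_zero] at this
        refine this.congr fun n => ?_
        simp [Function.comp, ← inner_conj_symm (w n) (b i)]
      simpa using h6.mul h5
    have hsum := tendsto_finset_sum Finset.univ (fun i _ => hterm i)
    have hepar : ∀ n, ∑ i, (⟪w n, b i⟫ : ℂ) * ⟪b i, w n⟫ = 1 := fun n => by
      rw [b.sum_inner_mul_inner]; exact hw1 n
    have hone : Tendsto (fun _ : ℕ => (1 : ℂ)) atTop (𝓝 0) := by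
      simp only [Finset.sum_const_zero] at hsum
      exact hsum.congr fun n => hepar n
    exact one_ne_zero (tendsto_nhds_unique tendsto_const_nhds hone)
  -- Step C: full norm bound
  obtain ⟨C, hCb⟩ := hC
  set Cb : ℝ := Real.sqrt (‖J₁‖ + 2 * C ^ 2) with hCbdef
  have hbound : ∀ f : X →₀ ℂ, ‖T₂ f‖ ≤ Cb * ‖T₁ f‖ := by
    intro f
    have h1 : ‖T₂ f‖ ^ 2 ≤ (‖J₁‖ + 2 * C ^ 2) * ‖T₁ f‖ ^ 2 := by
      have e1 := hnorm (T₂ f)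
      rw [hIP f f] at e1
      have e2 : (⟪T₁ f, J₁ (T₁ f)⟫).re ≤ ‖J₁‖ * ‖T₁ f‖ ^ 2 := by
        calc (⟪T₁ f, J₁ (T₁ f)⟫).re ≤ ‖(⟪T₁ f, J₁ (T₁ f)⟫ : ℂ)‖ := Complex.re_le_norm _
          _ ≤ ‖T₁ f‖ * ‖J₁ (T₁ f)‖ := norm_inner_le_norm _ _
          _ ≤ ‖T₁ f‖ * (‖J₁‖ * ‖T₁ f‖) := by gcongr; exact J₁.le_opNorm _
          _ = ‖J₁‖ * ‖T₁ f‖ ^ 2 := by ring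
      have e3 : ‖p (T₂ f)‖ ^ 2 ≤ (C * ‖T₁ f‖) ^ 2 := by
        have h4 := hCb f
        have h5 : 0 ≤ ‖p (T₂ f)‖ := norm_nonneg _
        nlinarith
      nlinarith
    calc ‖T₂ f‖ = Real.sqrt (‖T₂ f‖ ^ 2) := (Real.sqrt_sq (norm_nonneg _)).symm
      _ ≤ Real.sqrt ((‖J₁‖ + 2 * C ^ 2) * ‖T₁ f‖ ^ 2) := Real.sqrt_le_sqrt h1
      _ = Cb * ‖T₁ f‖ := by
          rw [Real.sqrt_mul (by positivity), Real.sqrt_sq (norm_nonneg _)]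
  -- Step D: construct the continuous map
  have hker : LinearMap.ker T₁ ≤ LinearMap.ker T₂ := by
    intro f hf
    rw [LinearMap.mem_ker] at hf ⊢
    have hb := hbound f
    rw [hf, norm_zero, mul_zero] at hb
    exact norm_le_zero_iff.mp hb
  set Tq : ((X →₀ ℂ) ⧸ LinearMap.ker T₁) →ₗ[ℂ] 𝓚₂ :=
    (LinearMap.ker T₁).liftQ T₂ hker with hTq
  have hrange : LinearMap.range T₁ = Submodule.span ℂ (Set.range v₁) := by
    rw [hT₁]; exact Finsupp.range_linearCombination ℂ
  set e₀ : (Submodule.span ℂ (Set.range v₁) : Submodule ℂ 𝓚₁) ≃ₗ[ℂ] LinearMap.range T₁ :=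
    LinearEquiv.ofEq _ _ hrange.symm with he₀
  set Φ₀ : (Submodule.span ℂ (Set.range v₁) : Submodule ℂ 𝓚₁) →ₗ[ℂ] 𝓚₂ :=
    Tq ∘ₗ (T₁.quotKerEquivRange.symm.toLinearMap ∘ₗ e₀.toLinearMap) with hΦ₀def
  have hΦ₀ : ∀ (f : X →₀ ℂ) (hf : T₁ f ∈ Submodule.span ℂ (Set.range v₁)),
      Φ₀ ⟨T₁ f, hf⟩ = T₂ f := by
    intro f hf
    have h1 : e₀ ⟨T₁ f, hf⟩ = ⟨T₁ f, LinearMap.mem_range_self T₁ f⟩ := rfl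
    have h2 : T₁.quotKerEquivRange (Submodule.Quotient.mk f)
        = ⟨T₁ f, LinearMap.mem_range_self T₁ f⟩ :=
      Subtype.ext (T₁.quotKerEquivRange_apply_mk f)
    have h3 : T₁.quotKerEquivRange.symm ⟨T₁ f, LinearMap.mem_range_self T₁ f⟩
        = Submodule.Quotient.mk f := by
      rw [← h2, LinearEquiv.symm_apply_apply]
    show Tq (T₁.quotKerEquivRange.symm (e₀ ⟨T₁ f, hf⟩)) = T₂ f
    rw [h1, h3, hTq, Submodule.liftQ_apply]
  have hΦ₀b : ∀ u : (Submodule.span ℂ (Set.range v₁) : Submodule ℂ 𝓚₁),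
      ‖Φ₀ u‖ ≤ Cb * ‖u‖ := by
    rintro ⟨z, hz⟩
    have hz' : z ∈ LinearMap.range T₁ := by rw [hrange]; exact hz
    obtain ⟨f, rfl⟩ := hz'
    rw [hΦ₀ f hz]
    exact hbound f
  set Φc := Φ₀.mkContinuous Cb hΦ₀b with hΦc
  have hdense : DenseRange ((Submodule.span ℂ (Set.range v₁)).subtypeL) :=
    hmin₁.denseRange_val
  have hui : IsUniformInducing ((Submodule.span ℂ (Set.range v₁)).subtypeL) :=
    isometry_subtype_coe.isUniformInducing
  refine ⟨Φc.extend ((Submodule.span ℂ (Set.range v₁)).subtypeL), fun f => ?_⟩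
  have hmem : T₁ f ∈ Submodule.span ℂ (Set.range v₁) := by
    rw [← hrange]; exact LinearMap.mem_range_self T₁ f
  have hfe : Finsupp.linearCombination ℂ v₁ f
      = ((Submodule.span ℂ (Set.range v₁)).subtypeL) ⟨T₁ f, hmem⟩ := rfl
  rw [hfe, ContinuousLinearMap.extend_eq (h_dense := hdense) (h_e := hui)]
  show Φ₀ ⟨T₁ f, hmem⟩ = Finsupp.linearCombination ℂ v₂ f
  rw [hΦ₀ f hmem]

private lemma inner_lc {X : Type*} {𝓚 : Type*} [NormedAddCommGroup 𝓚] [InnerProductSpace ℂ 𝓚]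
    (J : 𝓚 →L[ℂ] 𝓚) (v : X → 𝓚) (f g : X →₀ ℂ) :
    ⟪Finsupp.linearCombination ℂ v g, J (Finsupp.linearCombination ℂ v f)⟫
      = ∑ x ∈ g.support, ∑ y ∈ f.support,
          (starRingEnd ℂ) (g x) * f y * ⟪v x, J (v y)⟫ := by
  rw [Finsupp.linearCombination_apply, Finsupp.linearCombination_apply, Finsupp.sum, Finsupp.sum,
    map_sum, sum_inner]
  refine Finset.sum_congr rfl fun x _ => ?_
  rw [inner_smul_left, inner_sum, Finset.mul_sum]
  refine Finset.sum_congr rfl fun y _ => ?_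
  rw [map_smul, inner_smul_right]
  ring

set_option maxHeartbeats 800000 in
/-- For a Hermitian kernel `H` with finite negative signature, any two minimal
linearisations `(𝓚₁, J₁, v₁)` and `(𝓚₂, J₂, v₂)` with `ker (J₁ + I)` and `ker (J₂ + I)`
finite dimensional are unitarily equivalent. -/
theorem stmt7 {X : Type*} [Nonempty X] (H : X → X → ℂ) (hH : IsHermitianKernel H)
    (hκ : negSig H < ⊤)
    {𝓚₁ 𝓚₂ : Type*} [NormedAddCommGroup 𝓚₁] [InnerProductSpace ℂ 𝓚₁] [CompleteSpace 𝓚₁]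
    [NormedAddCommGroup 𝓚₂] [InnerProductSpace ℂ 𝓚₂] [CompleteSpace 𝓚₂]
    (J₁ : 𝓚₁ →L[ℂ] 𝓚₁) (J₂ : 𝓚₂ →L[ℂ] 𝓚₂)
    (hJ₁sa : IsSelfAdjoint J₁) (hJ₁sq : J₁ ∘L J₁ = ContinuousLinearMap.id ℂ 𝓚₁)
    (hJ₂sa : IsSelfAdjoint J₂) (hJ₂sq : J₂ ∘L J₂ = ContinuousLinearMap.id ℂ 𝓚₂)
    (v₁ : X → 𝓚₁) (v₂ : X → 𝓚₂)
    (hrep₁ : ∀ x y, H x y = (inner ℂ (v₁ x) (J₁ (v₁ y)) : ℂ))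
    (hrep₂ : ∀ x y, H x y = (inner ℂ (v₂ x) (J₂ (v₂ y)) : ℂ))
    (hmin₁ : Dense (Submodule.span ℂ (Set.range v₁) : Set 𝓚₁))
    (hmin₂ : Dense (Submodule.span ℂ (Set.range v₂) : Set 𝓚₂))
    (hfin₁ : FiniteDimensional ℂ (LinearMap.ker (J₁ + ContinuousLinearMap.id ℂ 𝓚₁).toLinearMap))
    (hfin₂ : FiniteDimensional ℂ (LinearMap.ker (J₂ + ContinuousLinearMap.id ℂ 𝓚₂).toLinearMap)) :
    ∃ Φ : 𝓚₁ →L[ℂ] 𝓚₂, Function.Bijective Φ ∧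
      (∀ u w : 𝓚₁, (inner ℂ (Φ w) (J₂ (Φ u)) : ℂ) = inner ℂ w (J₁ u)) ∧
      (∀ x, Φ (v₁ x) = v₂ x) := by
  have hIP : ∀ f g : X →₀ ℂ,
      ⟪Finsupp.linearCombination ℂ v₂ g, J₂ (Finsupp.linearCombination ℂ v₂ f)⟫
        = ⟪Finsupp.linearCombination ℂ v₁ g, J₁ (Finsupp.linearCombination ℂ v₁ f)⟫ := by
    intro f g
    rw [inner_lc, inner_lc]
    refine Finset.sum_congr rfl fun x _ => Finset.sum_congr rfl fun y _ => ?_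
    rw [← hrep₁ x y, ← hrep₂ x y]
  obtain ⟨Φ, hΦ⟩ := aux_exists J₁ J₂ hJ₂sa hJ₂sq v₁ v₂ hIP hmin₁ hmin₂ hfin₂
  obtain ⟨Ψ, hΨ⟩ := aux_exists J₂ J₁ hJ₁sa hJ₁sq v₂ v₁
    (fun f g => (hIP f g).symm) hmin₂ hmin₁ hfin₁
  have hΦv : ∀ x, Φ (v₁ x) = v₂ x := by
    intro x
    have := hΦ (Finsupp.single x 1)
    simpa [Finsupp.linearCombination_single] using this
  have hΨΦ : ∀ u : 𝓚₁, Ψ (Φ u) = u := by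
    have heq : (fun u : 𝓚₁ => Ψ (Φ u)) = (fun u : 𝓚₁ => u) := by
      refine Continuous.ext_on hmin₁ (Ψ.continuous.comp Φ.continuous) continuous_id ?_
      intro z hz
      rw [← Finsupp.range_linearCombination] at hz
      obtain ⟨f, rfl⟩ := hz
      show Ψ (Φ (Finsupp.linearCombination ℂ v₁ f)) = Finsupp.linearCombination ℂ v₁ f
      rw [hΦ f, hΨ f]
    exact fun u => congrFun heq u
  have hΦΨ : ∀ u : 𝓚₂, Φ (Ψ u) = u := by
    have heq : (fun u : 𝓚₂ => Φ (Ψ u)) = (fun u : 𝓚₂ => u) := by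
      refine Continuous.ext_on hmin₂ (Φ.continuous.comp Ψ.continuous) continuous_id ?_
      intro z hz
      rw [← Finsupp.range_linearCombination] at hz
      obtain ⟨f, rfl⟩ := hz
      show Φ (Ψ (Finsupp.linearCombination ℂ v₂ f)) = Finsupp.linearCombination ℂ v₂ f
      rw [hΨ f, hΦ f]
    exact fun u => congrFun heq u
  have step1 : ∀ (f : X →₀ ℂ) (w : 𝓚₁),
      ⟪Φ w, J₂ (Φ (Finsupp.linearCombination ℂ v₁ f))⟫
        = ⟪w, J₁ (Finsupp.linearCombination ℂ v₁ f)⟫ := by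
    intro f
    have hc1 : Continuous fun w : 𝓚₁ =>
        (⟪Φ w, J₂ (Φ (Finsupp.linearCombination ℂ v₁ f))⟫ : ℂ) :=
      Continuous.inner Φ.continuous continuous_const
    have hc2 : Continuous fun w : 𝓚₁ =>
        (⟪w, J₁ (Finsupp.linearCombination ℂ v₁ f)⟫ : ℂ) :=
      Continuous.inner continuous_id continuous_const
    have heq := Continuous.ext_on hmin₁ hc1 hc2 ?_
    · exact fun w => congrFun heq w
    · intro z hz
      rw [← Finsupp.range_linearCombination] at hz
      obtain ⟨g, rfl⟩ := hz
      show ⟪Φ (Finsupp.linearCombination ℂ v₁ g),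
          J₂ (Φ (Finsupp.linearCombination ℂ v₁ f))⟫ = _
      rw [hΦ g, hΦ f]
      exact hIP f g
  refine ⟨Φ, Function.bijective_iff_has_inverse.mpr ⟨Ψ, hΨΦ, hΦΨ⟩, fun u w => ?_, hΦv⟩
  have hcu1 : Continuous fun u : 𝓚₁ => (⟪Φ w, J₂ (Φ u)⟫ : ℂ) :=
    Continuous.inner continuous_const (J₂.continuous.comp Φ.continuous)
  have hcu2 : Continuous fun u : 𝓚₁ => (⟪w, J₁ u⟫ : ℂ) :=
    Continuous.inner continuous_const J₁.continuous
  have heq := Continuous.ext_on hmin₁ hcu1 hcu2 ?_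
  · exact congrFun heq u
  · intro z hz
    rw [← Finsupp.range_linearCombination] at hz
    obtain ⟨f, rfl⟩ := hz
    exact step1 f w
end

section
/- Fix a real number p with 1 < p < 2, let E = ℓ^p(ℕ; ℝ) be the real Banach space of p-summable real sequences, let E′ be its continuous dual, and set X = E × E′. Define the real symmetric kernel H on X by H((e,φ),(f,ψ)) = φ(f) + ψ(e). Then H cannot be written as a difference of two positive semidefinite kernels: there do not exist kernels K₁, K₂ : X × X → ℝ, each positive semidefinite, with H = K₁ − K₂. -/
/-- A real kernel `K` on `X` is positive semidefinite if
`∑_{x,y} K(x,y) f(y) f(x) ≥ 0` for every finitely supported `f : X → ℝ`. -/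
def IsPSDRealKernel {X : Type*} (K : X → X → ℝ) : Prop :=
  ∀ f : X →₀ ℝ, 0 ≤ ∑ x ∈ f.support, ∑ y ∈ f.support, K x y * f y * f x

set_option linter.unusedSectionVars false
noncomputable section S19

namespace S19

variable {X : Type*}

/-- The bilinear pairing on finitely supported functions induced by a kernel. -/
def pairL (B : X → X → ℝ) : (X →₀ ℝ) →ₗ[ℝ] (X →₀ ℝ) →ₗ[ℝ] ℝ :=
  Finsupp.linearCombination ℝ (fun x => Finsupp.linearCombination ℝ (B x))

lemma pairL_eq (B : X → X → ℝ) (c d : X →₀ ℝ) :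
    pairL B c d = ∑ x ∈ c.support, ∑ y ∈ d.support, B x y * d y * c x := by
  rw [pairL, Finsupp.linearCombination_apply, Finsupp.sum, LinearMap.sum_apply]
  refine Finset.sum_congr rfl fun x hx => ?_
  rw [LinearMap.smul_apply, Finsupp.linearCombination_apply, Finsupp.sum, smul_eq_mul,
    Finset.mul_sum]
  refine Finset.sum_congr rfl fun y hy => ?_
  simp only [smul_eq_mul]; ring

lemma pairL_psd {K : X → X → ℝ} (hK : IsPSDRealKernel K) (f : X →₀ ℝ) :
    0 ≤ pairL K f f := by
  rw [pairL_eq]; exact hK f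

lemma pairL_transpose (B : X → X → ℝ) (c d : X →₀ ℝ) :
    pairL (fun x y => B y x) c d = pairL B d c := by
  rw [pairL_eq, pairL_eq, Finset.sum_comm]
  exact Finset.sum_congr rfl fun y _ => Finset.sum_congr rfl fun x _ => by ring

lemma pairL_addB (B B' : X → X → ℝ) (c d : X →₀ ℝ) :
    pairL (fun x y => B x y + B' x y) c d = pairL B c d + pairL B' c d := by
  rw [pairL_eq, pairL_eq, pairL_eq, ← Finset.sum_add_distrib]
  refine Finset.sum_congr rfl fun x _ => ?_
  rw [← Finset.sum_add_distrib]
  exact Finset.sum_congr rfl fun y _ => by ring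

lemma pairL_symm {B : X → X → ℝ} (hsym : ∀ x y, B x y = B y x) (c d : X →₀ ℝ) :
    pairL B c d = pairL B d c := by
  conv_lhs => rw [show B = (fun x y => B y x) from funext fun x => funext fun y => hsym x y]
  exact pairL_transpose _ c d

/-- Cauchy-Schwarz for a symmetric positive semidefinite pairing. -/
lemma pairL_sq_le {B : X → X → ℝ} (hsym : ∀ x y, B x y = B y x)
    (hpsd : ∀ f, 0 ≤ pairL B f f) (c d : X →₀ ℝ) :
    (pairL B c d) ^ 2 ≤ pairL B c c * pairL B d d := by
  have key : ∀ t : ℝ,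
      0 ≤ pairL B d d * (t * t) + 2 * pairL B c d * t + pairL B c c := by
    intro t
    have h := hpsd (c + t • d)
    simp only [map_add, map_smul, LinearMap.add_apply, LinearMap.smul_apply,
      smul_eq_mul] at h
    have hs : pairL B d c = pairL B c d := pairL_symm hsym d c
    rw [hs] at h
    nlinarith [h]
  have h2 := discrim_le_zero key
  rw [discrim] at h2
  nlinarith [h2]

/-- The combined symmetrized kernel. -/
def Ks (K₁ K₂ : X → X → ℝ) : X → X → ℝ :=
  fun x y => K₁ x y + K₁ y x + (K₂ x y + K₂ y x)

lemma Ks_symm (K₁ K₂ : X → X → ℝ) : ∀ x y, Ks K₁ K₂ x y = Ks K₁ K₂ y x := by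
  intro x y; simp [Ks]; ring

lemma Ks_psd {K₁ K₂ : X → X → ℝ} (h1 : IsPSDRealKernel K₁) (h2 : IsPSDRealKernel K₂)
    (f : X →₀ ℝ) : 0 ≤ pairL (Ks K₁ K₂) f f := by
  have e : pairL (Ks K₁ K₂) f f
      = (pairL K₁ f f + pairL K₁ f f) + (pairL K₂ f f + pairL K₂ f f) := by
    rw [show Ks K₁ K₂ = fun x y => (K₁ x y + K₁ y x) + (K₂ x y + K₂ y x) from rfl]
    rw [pairL_addB (fun x y => K₁ x y + K₁ y x) (fun x y => K₂ x y + K₂ y x)]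
    rw [pairL_addB K₁ (fun x y => K₁ y x), pairL_addB K₂ (fun x y => K₂ y x)]
    rw [pairL_transpose K₁, pairL_transpose K₂]
  rw [e]
  have := pairL_psd h1 f; have := pairL_psd h2 f
  linarith

lemma Ks_diag_nonneg {K₁ K₂ : X → X → ℝ} (h1 : IsPSDRealKernel K₁)
    (h2 : IsPSDRealKernel K₂) (y : X) : 0 ≤ Ks K₁ K₂ y y := by
  have h := Ks_psd h1 h2 (Finsupp.single y 1)
  rwa [pairL_eq, Finsupp.support_single_ne_zero _ one_ne_zero, Finset.sum_singleton,
    Finset.sum_singleton, Finsupp.single_eq_same, mul_one, mul_one] at h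

lemma pairL_single_single (B : X → X → ℝ) (y : X) (t : ℝ) :
    pairL B (Finsupp.single y t) (Finsupp.single y t) = B y y * t * t := by
  rcases eq_or_ne t 0 with rfl | ht
  · simp [pairL_eq]
  · rw [pairL_eq, Finsupp.support_single_ne_zero _ ht, Finset.sum_singleton,
      Finset.sum_singleton, Finsupp.single_eq_same]


lemma pairL_single_pair (B : X → X → ℝ) (x y : X) (t : ℝ) :
    pairL B (Finsupp.single x 1) (Finsupp.single y t) = B x y * t := by
  rcases eq_or_ne t 0 with rfl|ht
  · simp [pairL_eq]
  · rw [pairL_eq, Finsupp.support_single_ne_zero _ one_ne_zero,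
      Finsupp.support_single_ne_zero _ ht, Finset.sum_singleton, Finset.sum_singleton,
      Finsupp.single_eq_same, Finsupp.single_eq_same, mul_one]

/-- The key Cauchy-Schwarz-type estimate for a kernel that is a difference of two PSD
kernels. -/
lemma key_CS {K₁ K₂ H : X → X → ℝ} (h1 : IsPSDRealKernel K₁) (h2 : IsPSDRealKernel K₂)
    (hsymH : ∀ x y, H x y = H y x) (hdiff : ∀ x y, H x y = K₁ x y - K₂ x y)
    (c d : X →₀ ℝ) :
    (pairL H c d) ^ 2 ≤ pairL (Ks K₁ K₂) c c * pairL (Ks K₁ K₂) d d := by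
  set S₁ : X → X → ℝ := fun x y => K₁ x y + K₁ y x with hS₁
  set S₂ : X → X → ℝ := fun x y => K₂ x y + K₂ y x with hS₂
  have hS₁sym : ∀ x y, S₁ x y = S₁ y x := fun x y => by simp [hS₁]; ring
  have hS₂sym : ∀ x y, S₂ x y = S₂ y x := fun x y => by simp [hS₂]; ring
  have hS₁psd : ∀ f, 0 ≤ pairL S₁ f f := fun f => by
    rw [hS₁, pairL_addB K₁ (fun x y => K₁ y x), pairL_transpose K₁]
    have := pairL_psd h1 f; linarith
  have hS₂psd : ∀ f, 0 ≤ pairL S₂ f f := fun f => by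
    rw [hS₂, pairL_addB K₂ (fun x y => K₂ y x), pairL_transpose K₂]
    have := pairL_psd h2 f; linarith
  -- 2 H = S₁ - S₂ pointwise
  have h2H : ∀ x y, 2 * H x y = S₁ x y - S₂ x y := by
    intro x y
    have := hdiff x y; have := hdiff y x; have := hsymH x y
    simp only [hS₁, hS₂]; linarith
  have hpair : 2 * pairL H c d = pairL S₁ c d - pairL S₂ c d := by
    rw [pairL_eq, pairL_eq, pairL_eq, ← Finset.sum_sub_distrib, Finset.mul_sum]
    refine Finset.sum_congr rfl fun x _ => ?_
    rw [← Finset.sum_sub_distrib, Finset.mul_sum]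
    refine Finset.sum_congr rfl fun y _ => ?_
    linear_combination (d y * c x) * h2H x y
  have hKs : ∀ (e f : X →₀ ℝ), pairL (Ks K₁ K₂) e f = pairL S₁ e f + pairL S₂ e f := by
    intro e f
    rw [show Ks K₁ K₂ = fun x y => S₁ x y + S₂ x y from rfl, pairL_addB]
  set u₁ := pairL S₁ c d
  set u₂ := pairL S₂ c d
  set a₁ := pairL S₁ c c
  set a₂ := pairL S₂ c c
  set b₁ := pairL S₁ d d
  set b₂ := pairL S₂ d d
  have hu₁ : u₁ ^ 2 ≤ a₁ * b₁ := pairL_sq_le hS₁sym hS₁psd c d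
  have hu₂ : u₂ ^ 2 ≤ a₂ * b₂ := pairL_sq_le hS₂sym hS₂psd c d
  have ha₁ : 0 ≤ a₁ := hS₁psd c
  have ha₂ : 0 ≤ a₂ := hS₂psd c
  have hb₁ : 0 ≤ b₁ := hS₁psd d
  have hb₂ : 0 ≤ b₂ := hS₂psd d
  rw [hKs c c, hKs d d]
  have hsq : (2 * u₁ * u₂) ^ 2 ≤ (a₁ * b₂ + a₂ * b₁) ^ 2 := by
    have h4 : u₁ ^ 2 * u₂ ^ 2 ≤ (a₁ * b₁) * (a₂ * b₂) := by
      have := mul_le_mul hu₁ hu₂ (sq_nonneg u₂) (mul_nonneg ha₁ hb₁)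
      linarith
    nlinarith [sq_nonneg (a₁ * b₂ - a₂ * b₁)]
  have habs : -(a₁ * b₂ + a₂ * b₁) ≤ 2 * u₁ * u₂ ∧ 2 * u₁ * u₂ ≤ a₁ * b₂ + a₂ * b₁ := by
    constructor <;> nlinarith [hsq, mul_nonneg ha₁ hb₂, mul_nonneg ha₂ hb₁]
  have hmain : (u₁ - u₂) ^ 2 ≤ (a₁ + a₂) * (b₁ + b₂) := by nlinarith [habs.1, habs.2]
  have hP : 0 ≤ (a₁ + a₂) * (b₁ + b₂) :=
    mul_nonneg (add_nonneg ha₁ ha₂) (add_nonneg hb₁ hb₂)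
  have h4 : 4 * (pairL H c d) ^ 2 = (u₁ - u₂) ^ 2 := by
    rw [← hpair]; ring
  linarith

lemma eq_zero_of_mul_le {A B : ℝ} (h : ∀ t : ℝ, 0 < t → t * A ≤ B) (hA : 0 ≤ A) :
    A = 0 := by
  by_contra hne
  have hApos : 0 < A := lt_of_le_of_ne hA (Ne.symm hne)
  have hB : 0 < B + 1 := by have := h 1 one_pos; linarith
  have h2 := h ((B + 1) / A) (by positivity)
  rw [div_mul_cancel₀ _ hApos.ne'] at h2
  linarith

section Star

variable {E : Type*} [NormedAddCommGroup E] [NormedSpace ℝ E] [CompleteSpace E]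

/-- The Schwartz kernel on `E × E′`. -/
def Hk : (E × StrongDual ℝ E) → (E × StrongDual ℝ E) → ℝ :=
  fun x y => x.2 y.1 + y.2 x.1

lemma Hk_symm (x y : E × StrongDual ℝ E) : Hk x y = Hk y x := add_comm _ _

lemma Hk_add_left (x x' y : E × StrongDual ℝ E) :
    Hk (x + x') y = Hk x y + Hk x' y := by
  simp only [Hk, Prod.fst_add, Prod.snd_add, ContinuousLinearMap.add_apply, map_add]
  ring

lemma Hk_smul_left (t : ℝ) (x y : E × StrongDual ℝ E) :
    Hk (t • x) y = t * Hk x y := by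
  simp only [Hk, Prod.smul_fst, Prod.smul_snd, ContinuousLinearMap.smul_apply, map_smul,
    smul_eq_mul]
  ring

lemma Hsingle_eq (x : E × StrongDual ℝ E) (d : (E × StrongDual ℝ E) →₀ ℝ) :
    pairL Hk (Finsupp.single x 1) d = ∑ y ∈ d.support, Hk x y * d y := by
  rw [pairL_eq, Finsupp.support_single_ne_zero _ one_ne_zero, Finset.sum_singleton]
  exact Finset.sum_congr rfl fun y _ => by rw [Finsupp.single_eq_same, mul_one]

/-- The bilinear version of `x, d ↦ pairL Hk (single x 1) d`. -/
def HsL : (E × StrongDual ℝ E) →ₗ[ℝ] ((E × StrongDual ℝ E) →₀ ℝ) →ₗ[ℝ] ℝ :=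
  LinearMap.mk₂ ℝ (fun x d => pairL Hk (Finsupp.single x 1) d)
    (fun x x' d => by
      show pairL Hk (Finsupp.single (x + x') 1) d
        = pairL Hk (Finsupp.single x 1) d + pairL Hk (Finsupp.single x' 1) d
      rw [Hsingle_eq, Hsingle_eq, Hsingle_eq, ← Finset.sum_add_distrib]
      exact Finset.sum_congr rfl fun y _ => by rw [Hk_add_left]; ring)
    (fun t x d => by
      show pairL Hk (Finsupp.single (t • x) 1) d = t • pairL Hk (Finsupp.single x 1) d
      rw [Hsingle_eq, Hsingle_eq, smul_eq_mul, Finset.mul_sum]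
      exact Finset.sum_congr rfl fun y _ => by rw [Hk_smul_left]; ring)
    (fun x d d' => map_add _ d d')
    (fun t x d => map_smul _ t d)

lemma HsL_apply (x : E × StrongDual ℝ E) (d : (E × StrongDual ℝ E) →₀ ℝ) :
    HsL x d = pairL Hk (Finsupp.single x 1) d := rfl

/-- The continuous linear functional `x ↦ Hk x y` for fixed `y`. -/
def HkCLM (y : E × StrongDual ℝ E) : (E × StrongDual ℝ E) →L[ℝ] ℝ :=
  (NormedSpace.inclusionInDoubleDual ℝ E y.1).comp
      (ContinuousLinearMap.snd ℝ E (StrongDual ℝ E))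
    + y.2.comp (ContinuousLinearMap.fst ℝ E (StrongDual ℝ E))

lemma HkCLM_apply (y x : E × StrongDual ℝ E) : HkCLM y x = Hk x y := by
  simp [HkCLM, Hk, NormedSpace.dual_def]

/-- The continuous linear functional `x ↦ HsL x d` for fixed `d`. -/
def LdCLM (d : (E × StrongDual ℝ E) →₀ ℝ) : (E × StrongDual ℝ E) →L[ℝ] ℝ :=
  ∑ y ∈ d.support, d y • HkCLM y

lemma LdCLM_apply (d : (E × StrongDual ℝ E) →₀ ℝ) (x : E × StrongDual ℝ E) :
    LdCLM d x = HsL x d := by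
  rw [HsL_apply, Hsingle_eq, LdCLM, ContinuousLinearMap.sum_apply]
  exact Finset.sum_congr rfl fun y _ => by
    rw [ContinuousLinearMap.smul_apply, HkCLM_apply, smul_eq_mul]; ring

/-- The Banach–Steinhaus upper bound: the pairing of `H` against `d` is controlled by
`‖x‖ · sqrt (pairL Ks d d)` uniformly. -/
lemma star_bound {K₁ K₂ : (E × StrongDual ℝ E) → (E × StrongDual ℝ E) → ℝ}
    (h1 : IsPSDRealKernel K₁) (h2 : IsPSDRealKernel K₂)
    (hdiff : ∀ x y, Hk x y = K₁ x y - K₂ x y) :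
    ∃ C : ℝ, 0 < C ∧ ∀ (x : E × StrongDual ℝ E)
      (d : (E × StrongDual ℝ E) →₀ ℝ),
      |HsL x d| ≤ C * ‖x‖ * Real.sqrt (pairL (Ks K₁ K₂) d d) := by
  have hCS := key_CS h1 h2 Hk_symm hdiff
  have hpt : ∀ x : E × StrongDual ℝ E, ∃ C,
      ∀ d : {d : (E × StrongDual ℝ E) →₀ ℝ // pairL (Ks K₁ K₂) d d ≤ 1},
        ‖LdCLM d.1 x‖ ≤ C := by
    intro x
    refine ⟨Real.sqrt (Ks K₁ K₂ x x), fun d => ?_⟩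
    rw [LdCLM_apply, Real.norm_eq_abs, HsL_apply]
    apply Real.abs_le_sqrt
    have h := hCS (Finsupp.single x 1) d.1
    rw [pairL_single_single] at h
    have hdd : 0 ≤ pairL (Ks K₁ K₂) d.1 d.1 := Ks_psd h1 h2 d.1
    have hxx : 0 ≤ Ks K₁ K₂ x x := Ks_diag_nonneg h1 h2 x
    nlinarith [h, d.2]
  obtain ⟨C', hC'⟩ := banach_steinhaus hpt
  have hCpos : (0:ℝ) < max C' 1 := lt_of_lt_of_le zero_lt_one (le_max_right _ _)
  have hble : ∀ (x : E × StrongDual ℝ E) (d' : (E × StrongDual ℝ E) →₀ ℝ),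
      pairL (Ks K₁ K₂) d' d' ≤ 1 → |HsL x d'| ≤ (max C' 1) * ‖x‖ := by
    intro x d' hd'
    have h1' := (LdCLM d').le_opNorm x
    have h2' := hC' ⟨d', hd'⟩
    rw [LdCLM_apply] at h1'
    calc |HsL x d'| = ‖HsL x d'‖ := (Real.norm_eq_abs _).symm
      _ ≤ ‖LdCLM d'‖ * ‖x‖ := h1'
      _ ≤ (max C' 1) * ‖x‖ := by
          apply mul_le_mul_of_nonneg_right _ (norm_nonneg x)
          exact le_trans h2' (le_max_left _ _)
  refine ⟨max C' 1, hCpos, ?_⟩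
  intro x d
  have hdd : 0 ≤ pairL (Ks K₁ K₂) d d := Ks_psd h1 h2 d
  have hsmul : ∀ t : ℝ, pairL (Ks K₁ K₂) (t • d) (t • d)
      = t * t * pairL (Ks K₁ K₂) d d := by
    intro t; simp only [map_smul, LinearMap.smul_apply, smul_eq_mul]; ring
  have hHsmul : ∀ t : ℝ, HsL x (t • d) = t * HsL x d := by
    intro t; simp only [map_smul, smul_eq_mul]
  rcases eq_or_lt_of_le hdd with hz | hpos
  · have hzero : |HsL x d| = 0 := by
      refine eq_zero_of_mul_le (B := (max C' 1) * ‖x‖) ?_ (abs_nonneg _)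
      intro t ht
      have hsc : pairL (Ks K₁ K₂) (t • d) (t • d) ≤ 1 := by
        rw [hsmul, ← hz]; norm_num
      have h3 := hble x (t • d) hsc
      rw [hHsmul, abs_mul, abs_of_pos ht] at h3
      exact h3
    rw [hzero]
    exact mul_nonneg (mul_nonneg hCpos.le (norm_nonneg x)) (Real.sqrt_nonneg _)
  · set s := Real.sqrt (pairL (Ks K₁ K₂) d d) with hs
    have hsq : 0 < s := Real.sqrt_pos.mpr hpos
    have hss : s * s = pairL (Ks K₁ K₂) d d := Real.mul_self_sqrt hdd
    have hsc : pairL (Ks K₁ K₂) (s⁻¹ • d) (s⁻¹ • d) ≤ 1 := by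
      rw [hsmul, ← hss]
      rw [show s⁻¹ * s⁻¹ * (s * s) = (s⁻¹ * s) * (s⁻¹ * s) by ring,
        inv_mul_cancel₀ hsq.ne']
      norm_num
    have h3 := hble x (s⁻¹ • d) hsc
    rw [hHsmul, abs_mul, abs_of_pos (inv_pos.mpr hsq)] at h3
    calc |HsL x d| = s * (s⁻¹ * |HsL x d|) := by
          rw [← mul_assoc, mul_inv_cancel₀ hsq.ne', one_mul]
      _ ≤ s * ((max C' 1) * ‖x‖) := mul_le_mul_of_nonneg_left h3 hsq.le
      _ = (max C' 1) * ‖x‖ * s := by ring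

end Star

section LpPart

set_option maxHeartbeats 1000000
set_option synthInstance.maxHeartbeats 400000

variable (p : ℝ) [Fact (1 ≤ ENNReal.ofReal p)]

local notation "Ep" => lp (fun _ : ℕ => ℝ) (ENNReal.ofReal p)

lemma Pne0 : ENNReal.ofReal p ≠ 0 :=
  (lt_of_lt_of_le zero_lt_one (Fact.out : 1 ≤ ENNReal.ofReal p)).ne'

/-- The `i`-th coordinate functional on `ℓᵖ`. -/
def coordCLM (i : ℕ) : StrongDual ℝ Ep :=
  LinearMap.mkContinuous
    { toFun := fun f => f i
      map_add' := fun f g => by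
        have h := congrFun (lp.coeFn_add f g) i
        simpa using h
      map_smul' := fun c f => by
        have h := congrFun (lp.coeFn_smul c f) i
        simpa using h }
    1 (fun f => by
      rw [one_mul]
      exact lp.norm_apply_le_norm (E := fun _ : ℕ => ℝ) (Pne0 p) f i)

lemma coord_apply (i : ℕ) (f : Ep) : coordCLM p i f = f i := rfl

lemma norm_coord_ge (hp1 : 1 < p) (i : ℕ) : 1 ≤ ‖coordCLM p i‖ := by
  have hp0 : 0 < p := lt_trans one_pos hp1
  have htr : (ENNReal.ofReal p).toReal = p := ENNReal.toReal_ofReal hp0.le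
  have hPp : 0 < (ENNReal.ofReal p).toReal := by rw [htr]; exact hp0
  have hsingle : ‖lp.single (E := fun _ : ℕ => ℝ) (ENNReal.ofReal p) i (1:ℝ)‖ = 1 := by
    have h := lp.norm_single (E := fun _ : ℕ => ℝ) (p := ENNReal.ofReal p)
      (ENNReal.ofReal_pos.mpr hp0) i (1:ℝ)
    rwa [norm_one] at h
  have happ : coordCLM p i (lp.single (E := fun _ : ℕ => ℝ) (ENNReal.ofReal p) i 1) = 1 := by
    rw [coord_apply, lp.single_apply]
    simp
  calc (1:ℝ) = ‖coordCLM p i (lp.single (E := fun _ : ℕ => ℝ) (ENNReal.ofReal p) i 1)‖ := by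
        rw [happ, norm_one]
    _ ≤ ‖coordCLM p i‖ * ‖lp.single (E := fun _ : ℕ => ℝ) (ENNReal.ofReal p) i 1‖ :=
        (coordCLM p i).le_opNorm _
    _ = ‖coordCLM p i‖ := by rw [hsingle, mul_one]

/-- The closed subspace of the dual generated by the coordinate functionals. -/
def Dsub : @Submodule ℝ (StrongDual ℝ Ep) _
    SeminormedAddCommGroup.toAddCommGroup.toAddCommMonoid NormedSpace.toModule :=
  (Submodule.span ℝ (Set.range (coordCLM p))).topologicalClosure

instance : CompleteSpace ↥(Dsub p) :=
  IsClosed.completeSpace_coe (hs := Submodule.isClosed_topologicalClosure _)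

lemma mem_D (i : ℕ) : coordCLM p i ∈ Dsub p :=
  Submodule.le_topologicalClosure _ (Submodule.subset_span ⟨i, rfl⟩)

lemma norm_comb_le (hp1 : 1 < p) (a : ℕ → ℝ) (s : Finset ℕ) :
    ‖∑ i ∈ s, a i • coordCLM p i‖ ≤ (∑ i ∈ s, |a i| ^ (p/(p-1))) ^ ((p-1)/p) := by
  have hp0 : 0 < p := lt_trans one_pos hp1
  have hp1' : p - 1 ≠ 0 := by intro h; rw [sub_eq_zero] at h; exact hp1.ne' h
  have hpq : p.HolderConjugate (p/(p-1)) := by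
    rw [Real.holderConjugate_iff]
    constructor
    · exact hp1
    · rw [inv_div]
      field_simp; ring
  have hsum_nonneg : (0:ℝ) ≤ ∑ i ∈ s, |a i| ^ (p/(p-1)) :=
    Finset.sum_nonneg fun i _ => Real.rpow_nonneg (abs_nonneg _) _
  refine ContinuousLinearMap.opNorm_le_bound _ (Real.rpow_nonneg hsum_nonneg _) fun f => ?_
  have h1 : ‖(∑ i ∈ s, a i • coordCLM p i) f‖ ≤ ∑ i ∈ s, |a i| * |f i| := by
    rw [ContinuousLinearMap.sum_apply]
    refine le_trans (norm_sum_le _ _) (Finset.sum_le_sum fun i _ => ?_)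
    rw [ContinuousLinearMap.smul_apply, norm_smul, coord_apply,
      Real.norm_eq_abs, Real.norm_eq_abs]
  have h2 : ∑ i ∈ s, |a i| * |f i|
      ≤ (∑ i ∈ s, |a i| ^ (p/(p-1))) ^ (1/(p/(p-1))) * (∑ i ∈ s, |f i| ^ p) ^ (1/p) := by
    have := Real.inner_le_Lp_mul_Lq s (fun i => |a i|) (fun i => |f i|) hpq.symm
    simpa [abs_abs] using this
  have h3 : (∑ i ∈ s, |f i| ^ p) ^ (1/p) ≤ ‖f‖ := by
    have htr : (ENNReal.ofReal p).toReal = p := ENNReal.toReal_ofReal hp0.le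
    have hs := lp.sum_rpow_le_norm_rpow (p := ENNReal.ofReal p)
      (by rw [htr]; exact hp0) f s
    rw [htr] at hs
    have hmono : (∑ i ∈ s, |f i| ^ p) ^ (1/p) ≤ (‖f‖ ^ p) ^ (1/p) := by
      apply Real.rpow_le_rpow
        (Finset.sum_nonneg fun i _ => Real.rpow_nonneg (abs_nonneg _) _) ?_ (by positivity)
      simpa [Real.norm_eq_abs] using hs
    rwa [← Real.rpow_mul (norm_nonneg f), mul_one_div_cancel hp0.ne', Real.rpow_one] at hmono
  have hq1 : 1/(p/(p-1)) = (p-1)/p := one_div_div _ _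
  calc ‖(∑ i ∈ s, a i • coordCLM p i) f‖ ≤ ∑ i ∈ s, |a i| * |f i| := h1
    _ ≤ (∑ i ∈ s, |a i| ^ (p/(p-1))) ^ (1/(p/(p-1))) * (∑ i ∈ s, |f i| ^ p) ^ (1/p) := h2
    _ ≤ (∑ i ∈ s, |a i| ^ (p/(p-1))) ^ (1/(p/(p-1))) * ‖f‖ :=
        mul_le_mul_of_nonneg_left h3 (Real.rpow_nonneg hsum_nonneg _)
    _ = (∑ i ∈ s, |a i| ^ (p/(p-1))) ^ ((p-1)/p) * ‖f‖ := by rw [hq1]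

lemma dual_rep (hp1 : 1 < p) (η : StrongDual ℝ ↥(Dsub p)) :
    ∃ g : Ep, ∀ ψ : ↥(Dsub p), η ψ = (ψ : StrongDual ℝ Ep) g := by
  classical
  have hp0 : 0 < p := lt_trans one_pos hp1
  have hp1' : p - 1 ≠ 0 := by intro h; rw [sub_eq_zero] at h; exact hp1.ne' h
  have hpsub : 0 < p - 1 := by linarith
  set b : ℕ → ℝ := fun i => η ⟨coordCLM p i, mem_D p i⟩ with hb
  have hpart : ∀ s : Finset ℕ, ∑ i ∈ s, |b i| ^ p ≤ ‖η‖ ^ p := by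
    intro s
    set a : ℕ → ℝ := fun i => Real.sign (b i) * |b i| ^ (p-1) with ha
    have hab : ∀ i, a i * b i = |b i| ^ p := by
      intro i
      rcases lt_trichotomy (b i) 0 with h|h|h
      · have hne : |b i| ≠ 0 := abs_ne_zero.mpr h.ne
        simp only [ha]
        rw [Real.sign_of_neg h,
          show (-1 : ℝ) * |b i| ^ (p-1) * b i = |b i| ^ (p-1) * (-(b i)) by ring,
          ← abs_of_neg h, ← Real.rpow_add_one hne, sub_add_cancel]
      · simp only [ha]; simp [h, Real.zero_rpow hp0.ne']
      · have hne : |b i| ≠ 0 := abs_ne_zero.mpr h.ne'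
        simp only [ha]
        rw [Real.sign_of_pos h,
          show (1 : ℝ) * |b i| ^ (p-1) * b i = |b i| ^ (p-1) * (b i) by ring]
        nth_rewrite 2 [← abs_of_pos h]
        rw [← Real.rpow_add_one hne, sub_add_cancel]
    have haq : ∀ i, |a i| ^ (p/(p-1)) = |b i| ^ p := by
      intro i
      rcases eq_or_ne (b i) 0 with h|h
      · have hq0 : p/(p-1) ≠ 0 := by positivity
        rw [ha]; simp [h, Real.zero_rpow hp0.ne', Real.zero_rpow hq0]
      · have habs : |a i| = |b i| ^ (p-1) := by
          rw [ha]; simp only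
          rw [abs_mul, abs_of_nonneg (Real.rpow_nonneg (abs_nonneg _) _)]
          rcases lt_or_gt_of_ne h with h'|h'
          · rw [Real.sign_of_neg h']; norm_num
          · rw [Real.sign_of_pos h']; norm_num
        rw [habs, ← Real.rpow_mul (abs_nonneg (b i)),
          show (p-1) * (p/(p-1)) = p by field_simp]
    set S := ∑ i ∈ s, |b i| ^ p with hS
    have hS0 : (0:ℝ) ≤ S :=
      Finset.sum_nonneg fun i _ => Real.rpow_nonneg (abs_nonneg _) _
    set ψs : ↥(Dsub p) := ∑ i ∈ s, a i • (⟨coordCLM p i, mem_D p i⟩ : ↥(Dsub p)) with hψs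
    have hmap : η ψs = S := by
      simp only [hψs, hS, map_sum, map_smul, smul_eq_mul]
      refine Finset.sum_congr rfl fun i _ => ?_
      rw [← hab i]
    have hcoe : (Dsub p).subtype ψs = ∑ i ∈ s, a i • coordCLM p i := by
      rw [hψs, map_sum]
      refine Finset.sum_congr rfl fun i _ => ?_
      rw [map_smul, Submodule.subtype_apply]
    have hnormx : ‖ψs‖ ≤ S ^ ((p-1)/p) := by
      have hcn : ‖ψs‖ = ‖∑ i ∈ s, a i • coordCLM p i‖ := by
        rw [← hcoe]; rfl
      rw [hcn]
      have hn2 := norm_comb_le p hp1 a s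
      have hsum_eq : (∑ i ∈ s, |a i| ^ (p/(p-1))) = S :=
        Finset.sum_congr rfl fun i _ => haq i
      rwa [hsum_eq] at hn2
    have hkey : S ≤ ‖η‖ * S ^ ((p-1)/p) := by
      calc S = η ψs := hmap.symm
        _ ≤ |η ψs| := le_abs_self _
        _ = ‖η ψs‖ := (Real.norm_eq_abs _).symm
        _ ≤ ‖η‖ * ‖ψs‖ := η.le_opNorm _
        _ ≤ ‖η‖ * S ^ ((p-1)/p) := mul_le_mul_of_nonneg_left hnormx (norm_nonneg η)
    rcases eq_or_lt_of_le hS0 with h0|hSpos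
    · rw [← h0]; positivity
    · have hsplit : S ^ (1/p) * S ^ ((p-1)/p) = S := by
        rw [← Real.rpow_add hSpos, show 1/p + (p-1)/p = 1 by field_simp; ring]
        exact Real.rpow_one S
      have hq2 : (0:ℝ) < S ^ ((p-1)/p) := Real.rpow_pos_of_pos hSpos _
      have hSp : S ^ (1/p) ≤ ‖η‖ := by
        have h5 : S ^ (1/p) * S ^ ((p-1)/p) ≤ ‖η‖ * S ^ ((p-1)/p) := by
          rw [hsplit]; exact hkey
        exact le_of_mul_le_mul_right h5 hq2
      calc S = (S ^ (1/p)) ^ p := by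
            rw [← Real.rpow_mul hS0, one_div_mul_cancel hp0.ne', Real.rpow_one]
        _ ≤ ‖η‖ ^ p := Real.rpow_le_rpow (Real.rpow_nonneg hS0 _) hSp hp0.le
  have hsumm : Summable (fun i => ‖b i‖ ^ (ENNReal.ofReal p).toReal) := by
    simp only [ENNReal.toReal_ofReal hp0.le]
    apply summable_of_sum_range_le (c := ‖η‖ ^ p)
    · intro n; positivity
    · intro n
      simpa [Real.norm_eq_abs] using hpart (Finset.range n)
  have hmem : Memℓp b (ENNReal.ofReal p) := memℓp_gen hsumm
  set g : Ep := ⟨b, hmem⟩ with hgdef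
  refine ⟨g, ?_⟩
  set ev : ↥(Dsub p) →L[ℝ] ℝ :=
    (NormedSpace.inclusionInDoubleDual ℝ Ep g).comp (Dsub p).subtypeL with hev
  set δ : ↥(Dsub p) →L[ℝ] ℝ := η - ev with hδ
  have hδcoord : ∀ i : ℕ, δ (⟨coordCLM p i, mem_D p i⟩ : ↥(Dsub p)) = 0 := by
    intro i
    rw [hδ, ContinuousLinearMap.sub_apply, hev, ContinuousLinearMap.comp_apply,
      NormedSpace.dual_def, Submodule.subtypeL_apply]
    have hcg : (coordCLM p i) g = b i := by rw [coord_apply]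
    rw [hcg, show b i = η ⟨coordCLM p i, mem_D p i⟩ from rfl, sub_self]
  have himg : Set.range (coordCLM p)
      = (Dsub p).subtype '' (Set.range fun i => (⟨coordCLM p i, mem_D p i⟩ : ↥(Dsub p))) := by
    ext x
    constructor
    · rintro ⟨i, rfl⟩; exact ⟨⟨coordCLM p i, mem_D p i⟩, ⟨i, rfl⟩, rfl⟩
    · rintro ⟨y, ⟨i, rfl⟩, rfl⟩; exact ⟨i, rfl⟩
  have hspanker : Submodule.span ℝ (Set.range fun i => (⟨coordCLM p i, mem_D p i⟩ : ↥(Dsub p)))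
      ≤ LinearMap.ker (δ : ↥(Dsub p) →ₗ[ℝ] ℝ) := by
    rw [Submodule.span_le]
    rintro x ⟨i, rfl⟩
    simp only [SetLike.mem_coe, LinearMap.mem_ker, ContinuousLinearMap.coe_coe]
    exact hδcoord i
  intro ψ
  have hψ : (ψ : StrongDual ℝ Ep)
      ∈ closure ((Submodule.span ℝ (Set.range (coordCLM p)) : Submodule ℝ _) : Set _) := by
    have h := ψ.2
    unfold Dsub at h
    rw [← Submodule.topologicalClosure_coe]
    exact h
  have hzero : δ ψ = 0 := by
    by_contra hne
    have habs : 0 < |δ ψ| := abs_pos.mpr hne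
    have hεv : 0 < |δ ψ| / (‖δ‖ + 1) := by positivity
    obtain ⟨m, hmMem, hmNear⟩ := Metric.mem_closure_iff.mp hψ _ hεv
    have hmMem' : m ∈ Submodule.span ℝ (Set.range (coordCLM p)) := hmMem
    rw [himg, Submodule.span_image] at hmMem'
    obtain ⟨mD, hmD, hmcoe⟩ := Submodule.mem_map.mp hmMem'
    have hδm : δ mD = 0 := hspanker hmD
    have hval : δ ψ = δ (ψ - mD) := by rw [map_sub, hδm, sub_zero]
    have hnm : ‖ψ - mD‖ < |δ ψ| / (‖δ‖ + 1) := by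
      have hdd : ‖ψ - mD‖ = dist (ψ : StrongDual ℝ Ep) m := by
        rw [dist_eq_norm, ← hmcoe]
        rfl
      rw [hdd]; exact hmNear
    have hest : |δ ψ| ≤ ‖δ‖ * ‖ψ - mD‖ := by
      rw [hval, ← Real.norm_eq_abs]
      exact δ.le_opNorm _
    have hlt : |δ ψ| < |δ ψ| := by
      calc |δ ψ| ≤ ‖δ‖ * ‖ψ - mD‖ := hest
        _ ≤ ‖δ‖ * (|δ ψ| / (‖δ‖ + 1)) := mul_le_mul_of_nonneg_left hnm.le (norm_nonneg δ)
        _ < (‖δ‖ + 1) * (|δ ψ| / (‖δ‖ + 1)) := by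
            apply mul_lt_mul_of_pos_right (lt_add_one _) hεv
        _ = |δ ψ| := by
            rw [mul_div_cancel₀]
            positivity
    exact lt_irrefl _ hlt
  have hzero' : η ψ - ev ψ = 0 := by
    rw [← hzero, hδ, ContinuousLinearMap.sub_apply]
  have hevψ : ev ψ = (ψ : StrongDual ℝ Ep) g := by
    rw [hev, ContinuousLinearMap.comp_apply, NormedSpace.dual_def, Submodule.subtypeL_apply]
  rw [← hevψ]
  linarith [hzero']

lemma lower_bound (hp1 : 1 < p)
    {K₁ K₂ : (Ep × StrongDual ℝ Ep) → (Ep × StrongDual ℝ Ep) → ℝ}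
    (h1 : IsPSDRealKernel K₁) (h2 : IsPSDRealKernel K₂)
    (hdiff : ∀ x y, Hk x y = K₁ x y - K₂ x y) :
    ∃ C₂ : ℝ, 0 < C₂ ∧ ∀ φ : StrongDual ℝ Ep, φ ∈ Dsub p → ∀ M : ℝ,
      (∀ d : (Ep × StrongDual ℝ Ep) →₀ ℝ, pairL (Ks K₁ K₂) d d ≤ 1 →
        |HsL ((0, φ) : Ep × StrongDual ℝ Ep) d| ≤ M) →
      ‖φ‖ ≤ C₂ * M := by
  classical
  have hpt : ∀ η : StrongDual ℝ ↥(Dsub p), ∃ C,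
      ∀ i : {φp : ↥(Dsub p) // ∀ d : (Ep × StrongDual ℝ Ep) →₀ ℝ,
        pairL (Ks K₁ K₂) d d ≤ 1 →
        |HsL ((0, (φp : StrongDual ℝ Ep)) : Ep × StrongDual ℝ Ep) d| ≤ 1},
      ‖(NormedSpace.inclusionInDoubleDualLi ℝ (i.1 : ↥(Dsub p))) η‖ ≤ C := by
    intro η
    obtain ⟨g, hg⟩ := dual_rep p hp1 η
    set y₀ : Ep × StrongDual ℝ Ep := (g, 0) with hy₀
    have hκ : 0 ≤ Ks K₁ K₂ y₀ y₀ := Ks_diag_nonneg h1 h2 y₀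
    refine ⟨Real.sqrt (Ks K₁ K₂ y₀ y₀), fun i => ?_⟩
    have hval : (NormedSpace.inclusionInDoubleDualLi ℝ (i.1 : ↥(Dsub p))) η = η i.1 := rfl
    rw [hval, Real.norm_eq_abs, hg i.1]
    have hHk : ∀ t : ℝ,
        HsL ((0, (i.1 : StrongDual ℝ Ep)) : Ep × StrongDual ℝ Ep)
          (Finsupp.single y₀ t)
        = (i.1 : StrongDual ℝ Ep) g * t := by
      intro t
      rw [HsL_apply, pairL_single_pair]
      congr 1
      simp [Hk, hy₀]
    have hKst : ∀ t : ℝ, pairL (Ks K₁ K₂) (Finsupp.single y₀ t) (Finsupp.single y₀ t)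
        = Ks K₁ K₂ y₀ y₀ * t * t := fun t => pairL_single_single _ _ _
    apply Real.abs_le_sqrt
    rcases eq_or_lt_of_le hκ with h0|hpos
    · have hzv : (i.1 : StrongDual ℝ Ep) g = 0 := by
        have hB : ∀ t : ℝ, 0 < t → t * |(i.1 : StrongDual ℝ Ep) g| ≤ 1 := by
          intro t ht
          have hc : pairL (Ks K₁ K₂) (Finsupp.single y₀ t) (Finsupp.single y₀ t) ≤ 1 := by
            rw [hKst, ← h0]
            norm_num
          have h6 := i.2 _ hc
          rw [hHk, abs_mul, abs_of_pos ht, mul_comm] at h6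
          exact h6
        exact abs_eq_zero.mp (eq_zero_of_mul_le hB (abs_nonneg _))
      rw [hzv]
      nlinarith [hκ]
    · set s := Real.sqrt (Ks K₁ K₂ y₀ y₀) with hsdef
      have hs : 0 < s := Real.sqrt_pos.mpr hpos
      have hss : s * s = Ks K₁ K₂ y₀ y₀ := Real.mul_self_sqrt hκ
      have hc : pairL (Ks K₁ K₂) (Finsupp.single y₀ s⁻¹) (Finsupp.single y₀ s⁻¹) ≤ 1 := by
        rw [hKst, ← hss,
          show s * s * s⁻¹ * s⁻¹ = (s * s⁻¹) * (s * s⁻¹) by ring, mul_inv_cancel₀ hs.ne']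
        norm_num
      have hbd := i.2 _ hc
      rw [hHk, abs_mul, abs_of_pos (inv_pos.mpr hs)] at hbd
      have h4 : |(i.1 : StrongDual ℝ Ep) g| ≤ s := by
        calc |(i.1 : StrongDual ℝ Ep) g|
            = (|(i.1 : StrongDual ℝ Ep) g| * s⁻¹) * s := by
              rw [mul_assoc, inv_mul_cancel₀ hs.ne', mul_one]
          _ ≤ 1 * s := mul_le_mul_of_nonneg_right hbd hs.le
          _ = s := one_mul s
      nlinarith [h4, abs_nonneg ((i.1 : StrongDual ℝ Ep) g),
        sq_abs ((i.1 : StrongDual ℝ Ep) g), hss]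
  obtain ⟨C', hC'⟩ := banach_steinhaus hpt
  have hC'norm : ∀ i : {φp : ↥(Dsub p) // ∀ d : (Ep × StrongDual ℝ Ep) →₀ ℝ,
      pairL (Ks K₁ K₂) d d ≤ 1 →
      |HsL ((0, (φp : StrongDual ℝ Ep)) : Ep × StrongDual ℝ Ep) d| ≤ 1},
      ‖(i.1 : StrongDual ℝ Ep)‖ ≤ C' := by
    intro i
    have h7 : ‖NormedSpace.inclusionInDoubleDualLi ℝ (i.1 : ↥(Dsub p))‖ ≤ C' := hC' i
    rwa [LinearIsometry.norm_map] at h7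
  set C₂ := max C' 1 with hC₂
  have hC₂pos : (0:ℝ) < C₂ := lt_of_lt_of_le zero_lt_one (le_max_right _ _)
  refine ⟨C₂, hC₂pos, ?_⟩
  have hMain : ∀ φ : StrongDual ℝ Ep, φ ∈ Dsub p → ∀ M : ℝ, 0 < M →
      (∀ d : (Ep × StrongDual ℝ Ep) →₀ ℝ, pairL (Ks K₁ K₂) d d ≤ 1 →
        |HsL ((0, φ) : Ep × StrongDual ℝ Ep) d| ≤ M) → ‖φ‖ ≤ C₂ * M := by
    intro φ hφ M hM hbd
    have hmem : M⁻¹ • φ ∈ Dsub p := Submodule.smul_mem _ _ hφ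
    have hsc : ∀ d : (Ep × StrongDual ℝ Ep) →₀ ℝ, pairL (Ks K₁ K₂) d d ≤ 1 →
        |HsL ((0, M⁻¹ • φ) : Ep × StrongDual ℝ Ep) d| ≤ 1 := by
      intro d hd
      have hxs : ((0, M⁻¹ • φ) : Ep × StrongDual ℝ Ep)
          = M⁻¹ • (((0, φ)) : Ep × StrongDual ℝ Ep) := by
        rw [Prod.smul_mk, smul_zero]
      rw [hxs, map_smul, LinearMap.smul_apply, smul_eq_mul, abs_mul,
        abs_of_pos (inv_pos.mpr hM)]
      calc M⁻¹ * |HsL ((0, φ) : Ep × StrongDual ℝ Ep) d|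
          ≤ M⁻¹ * M := mul_le_mul_of_nonneg_left (hbd d hd) (inv_pos.mpr hM).le
        _ = 1 := inv_mul_cancel₀ hM.ne'
    have h8 := hC'norm ⟨⟨M⁻¹ • φ, hmem⟩, hsc⟩
    rw [norm_smul, Real.norm_eq_abs, abs_of_pos (inv_pos.mpr hM)] at h8
    calc ‖φ‖ = M * (M⁻¹ * ‖φ‖) := by
          rw [← mul_assoc, mul_inv_cancel₀ hM.ne', one_mul]
      _ ≤ M * C' := mul_le_mul_of_nonneg_left h8 hM.le
      _ ≤ M * C₂ := mul_le_mul_of_nonneg_left (le_max_left _ _) hM.le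
      _ = C₂ * M := mul_comm _ _
  intro φ hφ M hbd
  have hM0 : 0 ≤ M := by
    have h9 := hbd 0 (by simp)
    exact le_trans (abs_nonneg _) h9
  rcases eq_or_lt_of_le hM0 with h0|hMpos
  · have hall : ∀ t : ℝ, 0 < t → ‖φ‖ ≤ C₂ * t := by
      intro t ht
      apply hMain φ hφ t ht
      intro d hd
      exact le_trans (hbd d hd) (by rw [← h0]; exact ht.le)
    by_contra hcon
    push_neg at hcon
    have hφpos : 0 < ‖φ‖ := by
      rw [← h0] at hcon
      calc (0:ℝ) = C₂ * 0 := by ring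
        _ < ‖φ‖ := hcon
    have h10 := hall (‖φ‖ / (2 * C₂)) (by positivity)
    rw [show C₂ * (‖φ‖ / (2 * C₂)) = ‖φ‖ / 2 * (C₂ / C₂) by ring,
      div_self hC₂pos.ne', mul_one] at h10
    linarith
  · exact hMain φ hφ M hMpos hbd

end LpPart

section Signs

/-- Sign attached to a boolean. -/
def sg (b : Bool) : ℝ := if b then 1 else -1

lemma sg_mul_self (b : Bool) : sg b * sg b = 1 := by cases b <;> simp [sg]

lemma abs_sg_le (b : Bool) : |sg b| ≤ 1 := by cases b <;> norm_num [sg]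

lemma sg_not (b : Bool) : sg (!b) = - sg b := by cases b <;> simp [sg]

lemma sum_sg_mul (n : ℕ) (i j : Fin n) :
    ∑ ε : Fin n → Bool, sg (ε i) * sg (ε j) = if i = j then (2:ℝ)^n else 0 := by
  rcases eq_or_ne i j with rfl|hij
  · rw [if_pos rfl]
    rw [Finset.sum_congr rfl (fun ε _ => sg_mul_self (ε i)), Finset.sum_const]
    rw [Finset.card_univ, Fintype.card_fun, Fintype.card_bool, Fintype.card_fin]
    simp
  · rw [if_neg hij]
    refine Finset.sum_involution (fun ε _ => Function.update ε i (!(ε i))) ?_ ?_ ?_ ?_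
    · intro ε _
      simp only [Function.update_self, Function.update_of_ne (Ne.symm hij), sg_not]
      ring
    · intro ε _ _ hgeq
      have h := congrFun hgeq i
      simp only [Function.update_self] at h
      simp at h
    · intro ε _; exact Finset.mem_univ _
    · intro ε _
      funext k
      rcases eq_or_ne k i with rfl|hk
      · simp [Function.update_self, Bool.not_not]
      · simp [Function.update_of_ne hk]

lemma bilin_sum_sum {M N : Type*} [AddCommMonoid M] [Module ℝ M] [AddCommMonoid N]
    [Module ℝ N] (P : M →ₗ[ℝ] N →ₗ[ℝ] ℝ) {n : ℕ} (c : Fin n → ℝ) (v : Fin n → M)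
    (w : Fin n → N) :
    P (∑ i, c i • v i) (∑ j, c j • w j) = ∑ i, ∑ j, c i * c j * P (v i) (w j) := by
  simp only [map_sum, map_smul, LinearMap.sum_apply, LinearMap.smul_apply, smul_eq_mul,
    Finset.mul_sum]
  rw [Finset.sum_comm]
  refine Finset.sum_congr rfl fun i _ => Finset.sum_congr rfl fun j _ => by ring

lemma sum_bool_expand {M N : Type*} [AddCommMonoid M] [Module ℝ M] [AddCommMonoid N]
    [Module ℝ N] (P : M →ₗ[ℝ] N →ₗ[ℝ] ℝ) {n : ℕ} (v : Fin n → M) (w : Fin n → N) :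
    ∑ ε : Fin n → Bool, P (∑ i, sg (ε i) • v i) (∑ j, sg (ε j) • w j)
      = 2^n * ∑ i, P (v i) (w i) := by
  calc ∑ ε : Fin n → Bool, P (∑ i, sg (ε i) • v i) (∑ j, sg (ε j) • w j)
      = ∑ ε : Fin n → Bool, ∑ i, ∑ j, sg (ε i) * sg (ε j) * P (v i) (w j) :=
        Finset.sum_congr rfl fun ε _ => bilin_sum_sum P _ v w
    _ = ∑ i, ∑ j, ∑ ε : Fin n → Bool, sg (ε i) * sg (ε j) * P (v i) (w j) := by
        rw [Finset.sum_comm]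
        exact Finset.sum_congr rfl fun i _ => Finset.sum_comm
    _ = ∑ i, ∑ j, (if i = j then (2:ℝ)^n else 0) * P (v i) (w j) := by
        refine Finset.sum_congr rfl fun i _ => Finset.sum_congr rfl fun j _ => ?_
        rw [← Finset.sum_mul, sum_sg_mul]
    _ = ∑ i, (2:ℝ)^n * P (v i) (w i) := by
        refine Finset.sum_congr rfl fun i _ => ?_
        simp only [ite_mul, zero_mul, Finset.sum_ite_eq, Finset.mem_univ, if_true]
    _ = 2^n * ∑ i, P (v i) (w i) := (Finset.mul_sum _ _ _).symm

end Signs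

section Jensen

variable (p : ℝ) [Fact (1 ≤ ENNReal.ofReal p)]

local notation "Ep" => lp (fun _ : ℕ => ℝ) (ENNReal.ofReal p)

lemma norm_sgsum_le (hp1 : 1 < p) (n : ℕ) (r : Fin n → ℝ) (hr : ∀ i, |r i| ≤ 1) :
    ‖∑ i : Fin n, r i • coordCLM p ↑i‖ ≤ (n:ℝ)^(1-1/p) := by
  have hp0 : 0 < p := lt_trans one_pos hp1
  have hnn : (0:ℝ) ≤ (n:ℝ)^(1-1/p) := Real.rpow_nonneg (Nat.cast_nonneg n) _
  refine ContinuousLinearMap.opNorm_le_bound _ hnn fun f => ?_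
  have h1 : ‖(∑ i : Fin n, r i • coordCLM p ↑i) f‖ ≤ ∑ i : Fin n, |f ↑i| := by
    rw [ContinuousLinearMap.sum_apply]
    refine le_trans (norm_sum_le _ _) (Finset.sum_le_sum fun i _ => ?_)
    rw [ContinuousLinearMap.smul_apply, norm_smul, coord_apply, Real.norm_eq_abs,
      Real.norm_eq_abs]
    calc |r i| * |f ↑i| ≤ 1 * |f ↑i| := mul_le_mul_of_nonneg_right (hr i) (abs_nonneg _)
      _ = |f ↑i| := one_mul _
  have h2 : ∑ i : Fin n, |f ↑i| = ∑ j ∈ Finset.range n, |f j| :=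
    Fin.sum_univ_eq_sum_range (fun j => |f j|) n
  have htr : (ENNReal.ofReal p).toReal = p := ENNReal.toReal_ofReal hp0.le
  have h3 : (∑ j ∈ Finset.range n, |f j|)^p ≤ (n:ℝ)^(p-1) * ‖f‖^p := by
    have hJ := Real.rpow_sum_le_const_mul_sum_rpow (Finset.range n) (fun j => f j) hp1.le
    have hcard : (((Finset.range n).card : ℕ) : ℝ) = (n:ℝ) := by simp
    have hlp := lp.sum_rpow_le_norm_rpow (p := ENNReal.ofReal p)
      (by rw [htr]; exact hp0) f (Finset.range n)
    rw [htr] at hlp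
    calc (∑ j ∈ Finset.range n, |f j|)^p
        ≤ (((Finset.range n).card : ℕ) : ℝ)^(p-1) * ∑ j ∈ Finset.range n, |f j|^p := hJ
      _ = (n:ℝ)^(p-1) * ∑ j ∈ Finset.range n, |f j|^p := by rw [hcard]
      _ ≤ (n:ℝ)^(p-1) * ‖f‖^p := by
          apply mul_le_mul_of_nonneg_left _ (Real.rpow_nonneg (Nat.cast_nonneg n) _)
          simpa [Real.norm_eq_abs] using hlp
  have h4 : ∑ j ∈ Finset.range n, |f j| ≤ (n:ℝ)^(1-1/p) * ‖f‖ := by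
    have habs0 : (0:ℝ) ≤ ∑ j ∈ Finset.range n, |f j| :=
      Finset.sum_nonneg fun j _ => abs_nonneg _
    have h5 : ((∑ j ∈ Finset.range n, |f j|)^p)^(1/p) ≤ ((n:ℝ)^(p-1) * ‖f‖^p)^(1/p) :=
      Real.rpow_le_rpow (Real.rpow_nonneg habs0 _) h3 (by positivity)
    rw [← Real.rpow_mul habs0, mul_one_div_cancel hp0.ne', Real.rpow_one,
      Real.mul_rpow (Real.rpow_nonneg (Nat.cast_nonneg n) _)
        (Real.rpow_nonneg (norm_nonneg f) _),
      ← Real.rpow_mul (Nat.cast_nonneg n), ← Real.rpow_mul (norm_nonneg f),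
      mul_one_div_cancel hp0.ne', Real.rpow_one,
      show (p-1) * (1/p) = 1 - 1/p by rw [mul_one_div, sub_div, div_self hp0.ne']] at h5
    exact h5
  calc ‖(∑ i : Fin n, r i • coordCLM p ↑i) f‖ ≤ ∑ i : Fin n, |f ↑i| := h1
    _ = ∑ j ∈ Finset.range n, |f j| := h2
    _ ≤ (n:ℝ)^(1-1/p) * ‖f‖ := h4

end Jensen

end S19

end S19

open S19 Filter in
private theorem stmt19_aux (p : ℝ) (hp1 : 1 < p) (hp2 : p < 2)
    [Fact (1 ≤ ENNReal.ofReal p)] :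
    ¬ ∃ K₁ K₂ :
        (lp (fun _ : ℕ => ℝ) (ENNReal.ofReal p) ×
          StrongDual ℝ (lp (fun _ : ℕ => ℝ) (ENNReal.ofReal p))) →
        (lp (fun _ : ℕ => ℝ) (ENNReal.ofReal p) ×
          StrongDual ℝ (lp (fun _ : ℕ => ℝ) (ENNReal.ofReal p))) → ℝ,
      IsPSDRealKernel K₁ ∧ IsPSDRealKernel K₂ ∧
      ∀ x y : lp (fun _ : ℕ => ℝ) (ENNReal.ofReal p) ×
          StrongDual ℝ (lp (fun _ : ℕ => ℝ) (ENNReal.ofReal p)),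
        x.2 y.1 + y.2 x.1 = K₁ x y - K₂ x y := by
  rintro ⟨K₁, K₂, h1, h2, heq⟩
  have hp0 : 0 < p := lt_trans one_pos hp1
  have hdiff : ∀ x y : lp (fun _ : ℕ => ℝ) (ENNReal.ofReal p) ×
      StrongDual ℝ (lp (fun _ : ℕ => ℝ) (ENNReal.ofReal p)),
      Hk x y = K₁ x y - K₂ x y := fun x y => heq x y
  obtain ⟨C, hC0, hstar⟩ := star_bound h1 h2 hdiff
  obtain ⟨C₂, hC₂0, hlow⟩ := lower_bound p hp1 h1 h2 hdiff
  set c' : ℝ := 1/(2*C₂) with hc'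
  have hc'pos : 0 < c' := by positivity
  have hbad : ∀ i : ℕ, ∃ d, pairL (Ks K₁ K₂) d d ≤ 1 ∧
      c' < |HsL ((0, coordCLM p i)) d| := by
    intro i
    by_contra hno
    push_neg at hno
    have h5 := hlow (coordCLM p i) (mem_D p i) c' hno
    have h6 := norm_coord_ge p hp1 i
    rw [hc', show C₂ * (1/(2*C₂)) = 1/2 * (C₂/C₂) by ring, div_self hC₂0.ne',
      mul_one] at h5
    linarith
  choose dd hdd1 hdd2 using hbad
  set dv : ℕ → ((lp (fun _ : ℕ => ℝ) (ENNReal.ofReal p) ×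
      StrongDual ℝ (lp (fun _ : ℕ => ℝ) (ENNReal.ofReal p))) →₀ ℝ) :=
    fun i => (if 0 ≤ HsL ((0, coordCLM p i)) (dd i) then (1:ℝ) else -1) • dd i with hdv
  have hsq : ∀ (t : ℝ) d, pairL (Ks K₁ K₂) (t • d) (t • d)
      = t * t * pairL (Ks K₁ K₂) d d := by
    intro t d; simp only [map_smul, LinearMap.smul_apply, smul_eq_mul]; ring
  have hdv1 : ∀ i, pairL (Ks K₁ K₂) (dv i) (dv i) ≤ 1 := by
    intro i
    simp only [hdv]
    rcases le_or_gt 0 (HsL ((0, coordCLM p i)) (dd i)) with h|h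
    · rw [if_pos h, one_smul]; exact hdd1 i
    · rw [if_neg (not_le.mpr h), hsq,
        show ((-1:ℝ)) * (-1) * pairL (Ks K₁ K₂) (dd i) (dd i)
          = pairL (Ks K₁ K₂) (dd i) (dd i) by ring]
      exact hdd1 i
  have hdv2 : ∀ i, c' < HsL ((0, coordCLM p i)) (dv i) := by
    intro i
    simp only [hdv]
    rcases le_or_gt 0 (HsL ((0, coordCLM p i)) (dd i)) with h|h
    · rw [if_pos h, one_smul]
      have h7 := hdd2 i; rwa [abs_of_nonneg h] at h7
    · rw [if_neg (not_le.mpr h), map_smul, smul_eq_mul]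
      have h7 := hdd2 i; rw [abs_of_neg h] at h7; linarith
  have hkey : ∀ n : ℕ, c' * n ≤ C * (n:ℝ)^(1-1/p) * Real.sqrt n := by
    intro n
    set v : Fin n → (lp (fun _ : ℕ => ℝ) (ENNReal.ofReal p) ×
        StrongDual ℝ (lp (fun _ : ℕ => ℝ) (ENNReal.ofReal p))) :=
      fun i => (0, coordCLM p ↑i) with hv
    set w : Fin n → ((lp (fun _ : ℕ => ℝ) (ENNReal.ofReal p) ×
        StrongDual ℝ (lp (fun _ : ℕ => ℝ) (ENNReal.ofReal p))) →₀ ℝ) :=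
      fun i => dv ↑i with hw
    have hexpH := sum_bool_expand HsL v w
    have hexpK := sum_bool_expand (pairL (Ks K₁ K₂)) w w
    have hdiag : (n:ℝ) * c' ≤ ∑ i : Fin n, HsL (v i) (w i) := by
      calc (n:ℝ) * c' = ∑ _i : Fin n, c' := by
            rw [Finset.sum_const, Finset.card_univ, Fintype.card_fin, nsmul_eq_mul]
        _ ≤ ∑ i : Fin n, HsL (v i) (w i) :=
            Finset.sum_le_sum fun i _ => (hdv2 ↑i).le
    have hnorm : ∀ ε : Fin n → Bool, ‖∑ i, sg (ε i) • v i‖ ≤ (n:ℝ)^(1-1/p) := by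
      intro ε
      have hxx : (∑ i, sg (ε i) • v i)
          = ((0, ∑ i : Fin n, sg (ε i) • coordCLM p ↑i) :
              lp (fun _ : ℕ => ℝ) (ENNReal.ofReal p) ×
              StrongDual ℝ (lp (fun _ : ℕ => ℝ) (ENNReal.ofReal p))) := by
        apply Prod.ext
        · rw [Prod.fst_sum]
          simp [hv]
        · rw [Prod.snd_sum]
          simp [hv]
      rw [hxx, Prod.norm_def]
      simp only [norm_zero]
      rw [max_eq_right (norm_nonneg _)]
      exact norm_sgsum_le p hp1 n (fun i => sg (ε i))
        (fun i => abs_sg_le (ε i))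
    have hKdiag : ∑ i : Fin n, pairL (Ks K₁ K₂) (w i) (w i) ≤ (n:ℝ) := by
      calc ∑ i : Fin n, pairL (Ks K₁ K₂) (w i) (w i) ≤ ∑ _i : Fin n, (1:ℝ) :=
            Finset.sum_le_sum fun i _ => hdv1 ↑i
        _ = (n:ℝ) := by
            rw [Finset.sum_const, Finset.card_univ, Fintype.card_fin, nsmul_eq_mul,
              mul_one]
    have hsqrt : ∑ ε : Fin n → Bool,
        Real.sqrt (pairL (Ks K₁ K₂) (∑ i, sg (ε i) • w i) (∑ i, sg (ε i) • w i))
        ≤ 2^n * Real.sqrt n := by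
      set F : (Fin n → Bool) → ℝ := fun ε =>
        pairL (Ks K₁ K₂) (∑ i, sg (ε i) • w i) (∑ i, sg (ε i) • w i) with hF
      have hFnn : ∀ ε, 0 ≤ F ε := fun ε => Ks_psd h1 h2 _
      have hFsum : ∑ ε : Fin n → Bool, F ε ≤ 2^n * n := by
        calc ∑ ε : Fin n → Bool, F ε
            = 2^n * ∑ i : Fin n, pairL (Ks K₁ K₂) (w i) (w i) := hexpK
          _ ≤ 2^n * n := mul_le_mul_of_nonneg_left hKdiag (by positivity)
      have hCS2 := Finset.sum_mul_sq_le_sq_mul_sq Finset.univ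
        (fun _ : Fin n → Bool => (1:ℝ)) (fun ε => Real.sqrt (F ε))
      have hcard : ∑ _ε : Fin n → Bool, (1:ℝ)^2 = 2^n := by
        simp only [one_pow, Finset.sum_const, Finset.card_univ, Fintype.card_fun,
          Fintype.card_bool, Fintype.card_fin, nsmul_eq_mul, mul_one]
        push_cast
        ring
      have hsq2 : ∑ ε : Fin n → Bool, (Real.sqrt (F ε))^2 = ∑ ε : Fin n → Bool, F ε :=
        Finset.sum_congr rfl fun ε _ => Real.sq_sqrt (hFnn ε)
      have h11 : (∑ ε : Fin n → Bool, Real.sqrt (F ε))^2 ≤ 2^n * (2^n * n) := by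
        have h12 := hCS2
        simp only [one_mul] at h12
        rw [hcard, hsq2] at h12
        exact le_trans h12 (mul_le_mul_of_nonneg_left hFsum (by positivity))
      have hnn2 : (0:ℝ) ≤ ∑ ε : Fin n → Bool, Real.sqrt (F ε) :=
        Finset.sum_nonneg fun ε _ => Real.sqrt_nonneg _
      have h13 : ∑ ε : Fin n → Bool, Real.sqrt (F ε) ≤ Real.sqrt (2^n * (2^n * n)) := by
        rw [show (∑ ε : Fin n → Bool, Real.sqrt (F ε))
          = Real.sqrt ((∑ ε : Fin n → Bool, Real.sqrt (F ε))^2) by rw [Real.sqrt_sq hnn2]]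
        exact Real.sqrt_le_sqrt h11
      have h14 : Real.sqrt ((2:ℝ)^n * (2^n * n)) = 2^n * Real.sqrt n := by
        rw [show (2:ℝ)^n * (2^n * n) = ((2:ℝ)^n)^2 * n by ring,
          Real.sqrt_mul (sq_nonneg _), Real.sqrt_sq (by positivity : (0:ℝ) ≤ (2:ℝ)^n)]
      rw [h14] at h13
      exact h13
    have hchain : (2:ℝ)^n * ((n:ℝ) * c') ≤ 2^n * (C * (n:ℝ)^(1-1/p) * Real.sqrt n) := by
      calc (2:ℝ)^n * ((n:ℝ) * c')
          ≤ 2^n * ∑ i : Fin n, HsL (v i) (w i) :=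
            mul_le_mul_of_nonneg_left hdiag (by positivity)
        _ = ∑ ε : Fin n → Bool, HsL (∑ i, sg (ε i) • v i) (∑ j, sg (ε j) • w j) :=
            hexpH.symm
        _ ≤ ∑ ε : Fin n → Bool, |HsL (∑ i, sg (ε i) • v i) (∑ j, sg (ε j) • w j)| :=
            Finset.sum_le_sum fun ε _ => le_abs_self _
        _ ≤ ∑ ε : Fin n → Bool, C * (n:ℝ)^(1-1/p) *
              Real.sqrt (pairL (Ks K₁ K₂) (∑ j, sg (ε j) • w j) (∑ j, sg (ε j) • w j)) := by
            refine Finset.sum_le_sum fun ε _ => ?_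
            refine le_trans (hstar _ _) ?_
            apply mul_le_mul_of_nonneg_right _ (Real.sqrt_nonneg _)
            exact mul_le_mul_of_nonneg_left (hnorm ε) hC0.le
        _ = C * (n:ℝ)^(1-1/p) * ∑ ε : Fin n → Bool,
              Real.sqrt (pairL (Ks K₁ K₂) (∑ j, sg (ε j) • w j) (∑ j, sg (ε j) • w j)) := by
            rw [Finset.mul_sum]
        _ ≤ C * (n:ℝ)^(1-1/p) * (2^n * Real.sqrt n) := by
            apply mul_le_mul_of_nonneg_left hsqrt
            positivity
        _ = 2^n * (C * (n:ℝ)^(1-1/p) * Real.sqrt n) := by ring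
    have h2n : (0:ℝ) < 2^n := by positivity
    have h15 := le_of_mul_le_mul_left hchain h2n
    linarith
  have hγ : (0:ℝ) < 1/p - 1/2 := by
    have h12 : 1/2 < 1/p := by
      rw [div_lt_div_iff₀ (by norm_num) hp0]
      linarith
    linarith
  have htend : Tendsto (fun n : ℕ => c' * (n:ℝ)^(1/p - 1/2)) atTop atTop := by
    apply Tendsto.const_mul_atTop hc'pos
    exact (tendsto_rpow_atTop hγ).comp tendsto_natCast_atTop_atTop
  obtain ⟨n, hn, hn1⟩ := ((htend.eventually_gt_atTop C).and (eventually_ge_atTop 1)).exists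
  have hn1' : (1:ℝ) ≤ (n:ℝ) := by exact_mod_cast hn1
  have hnpos : (0:ℝ) < (n:ℝ) := lt_of_lt_of_le zero_lt_one hn1'
  have hkn := hkey n
  have e1 : Real.sqrt (n:ℝ) = (n:ℝ)^((1:ℝ)/2) := Real.sqrt_eq_rpow _
  have e3 : (n:ℝ)^(1 - 1/p) * (n:ℝ)^((1:ℝ)/2) = (n:ℝ)^(3/2 - 1/p) := by
    rw [← Real.rpow_add hnpos]
    congr 1
    ring
  have e4 : (n:ℝ)^(1/p - 1/2) * (n:ℝ)^(3/2 - 1/p) = (n:ℝ) := by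
    rw [← Real.rpow_add hnpos, show 1/p - 1/2 + (3/2 - 1/p) = 1 by ring, Real.rpow_one]
  have hfinal : c' * (n:ℝ)^(1/p - 1/2) ≤ C := by
    have hpow : (0:ℝ) < (n:ℝ)^(3/2 - 1/p) := Real.rpow_pos_of_pos hnpos _
    apply le_of_mul_le_mul_right _ hpow
    calc c' * (n:ℝ)^(1/p - 1/2) * (n:ℝ)^(3/2 - 1/p) = c' * (n:ℝ) := by
          rw [mul_assoc, e4]
      _ ≤ C * (n:ℝ)^(1-1/p) * Real.sqrt (n:ℝ) := hkn
      _ = C * (n:ℝ)^(3/2 - 1/p) := by rw [e1, mul_assoc, e3]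
  linarith


/-- Schwartz's counterexample: For `1 < p < 2`, `E = ℓ^p(ℕ; ℝ)` and `E′` its
continuous dual, the symmetric kernel `H((e,φ),(f,ψ)) = φ(f) + ψ(e)` on `X = E × E′` cannot
be written as a difference of two positive semidefinite kernels. -/
theorem stmt19 (p : ℝ) (hp1 : 1 < p) (hp2 : p < 2)
    [Fact (1 ≤ ENNReal.ofReal p)] :
    ¬ ∃ K₁ K₂ :
        (lp (fun _ : ℕ => ℝ) (ENNReal.ofReal p) ×
          StrongDual ℝ (lp (fun _ : ℕ => ℝ) (ENNReal.ofReal p))) →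
        (lp (fun _ : ℕ => ℝ) (ENNReal.ofReal p) ×
          StrongDual ℝ (lp (fun _ : ℕ => ℝ) (ENNReal.ofReal p))) → ℝ,
      IsPSDRealKernel K₁ ∧ IsPSDRealKernel K₂ ∧
      ∀ x y : lp (fun _ : ℕ => ℝ) (ENNReal.ofReal p) ×
          StrongDual ℝ (lp (fun _ : ℕ => ℝ) (ENNReal.ofReal p)),
        x.2 y.1 + y.2 x.1 = K₁ x y - K₂ x y :=
  stmt19_aux p hp1 hp2
end
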